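/- For any tight finite EG program Γ, an interpretation I is a stable model of Γ if and only if I is contained in the vocabulary of Γ and I satisfies the completion of Γ. -/

import Mathlib

namespace EG


/-! ### Relation symbols -/

inductive Rel : Type where
  | req | rne | rlt | rle | rgt | rge

/-- Evaluation of a relation symbol relative to a strict total order `lt`
on the domain (equality is genuine equality of domain elements). -/
def Rel.eval {α : Type} (lt : α → α → Prop) : Rel → α → α → Prop
  | .req, a, b => a = b
  | .rne, a, b => a ≠ b
  | .rlt, a, b => lt a b
  | .rle, a, b => lt a b ∨ a = b
  | .rgt, a, b => lt b a
  | .rge, a, b => lt b a ∨ a = b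

/-! ### Precomputed terms -/

/-- Precomputed terms over a type `C` of symbolic constants:
numerals, symbolic constants, `inf`, `sup`, and applications of a symbolic
constant to a tuple of precomputed terms. -/
inductive Pre (C : Type) : Type where
  | inf
  | sup
  | num (n : ℤ)
  | sym (c : C)
  | app (f : C) (args : List (Pre C))

/-- The assumed total order on precomputed terms: a strict total order with
`inf` least, `sup` greatest, in which numerals are ordered as the integers. -/
structure PreOrderOK {C : Type} (lt : Pre C → Pre C → Prop) : Prop where
  irrefl : ∀ a, ¬ lt a a
  trans : ∀ a b c, lt a b → lt b c → lt a c
  total : ∀ a b, lt a b ∨ a = b ∨ lt b a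
  inf_least : ∀ a, a ≠ Pre.inf → lt Pre.inf a
  sup_greatest : ∀ a, a ≠ Pre.sup → lt a Pre.sup
  num_iff : ∀ m n : ℤ, (lt (Pre.num m) (Pre.num n) ↔ m < n)

/-- Atoms `p(r)` where `r` is a tuple of precomputed terms. -/
abbrev EGAtom (C : Type) := C × List (Pre C)

/-- An interpretation is a set of atoms over precomputed terms. -/
abbrev Interp (C : Type) := Set (EGAtom C)

/-- Valuations: variables (natural numbers) ↦ precomputed terms. -/
abbrev Val (C : Type) := ℕ → Pre C

/-- Simultaneously update a valuation on a list of variables by a list of values. -/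
def updList {C : Type} : Val C → List ℕ → List (Pre C) → Val C
  | v, [], _ => v
  | v, _ :: _, [] => v
  | v, x :: xs, r :: rs => Function.update (updList v xs rs) x r

/-! ### Terms -/

/-- Terms over symbolic constants `C` and operation names `O`. -/
inductive Term (C O : Type) : Type where
  | num (n : ℤ)
  | sym (c : C)
  | var (x : ℕ)
  | inf
  | sup
  | app (f : C) (ts : List (Term C O))
  | op (o : O) (ts : List (Term C O))
  | interval (t₁ t₂ : Term C O)

mutual
/-- The list of variables occurring in a term. -/
def Term.varList {C O : Type} : Term C O → List ℕ
  | .num _ => []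
  | .sym _ => []
  | .var x => [x]
  | .inf => []
  | .sup => []
  | .app _ ts => Term.varListL ts
  | .op _ ts => Term.varListL ts
  | .interval t₁ t₂ => t₁.varList ++ t₂.varList

def Term.varListL {C O : Type} : List (Term C O) → List ℕ
  | [] => []
  | t :: ts => t.varList ++ Term.varListL ts
end

/-- A term (or tuple of terms, etc.) is ground if it contains no variables. -/
def Term.Ground {C O : Type} (t : Term C O) : Prop := t.varList = []

mutual
/-- The set of values of a term under a valuation `v` (for a ground term this
is the set `[t]` of its values, independent of `v`). `opFun` gives the partial
integer function denoted by each operation name. -/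
def Term.val {C O : Type} (opFun : O → List ℤ → Option ℤ) (v : Val C) :
    Term C O → Set (Pre C)
  | .num n => {Pre.num n}
  | .sym c => {Pre.sym c}
  | .var x => {v x}
  | .inf => {Pre.inf}
  | .sup => {Pre.sup}
  | .app f ts => {r | ∃ rs : List (Pre C), Term.vals opFun v ts rs ∧ r = Pre.app f rs}
  | .op o ts => {r | ∃ ks : List ℤ, Term.vals opFun v ts (ks.map Pre.num) ∧
      ∃ m : ℤ, opFun o ks = some m ∧ r = Pre.num m}
  | .interval t₁ t₂ => {r | ∃ k₁ k₂ m : ℤ, Pre.num k₁ ∈ Term.val opFun v t₁ ∧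
      Pre.num k₂ ∈ Term.val opFun v t₂ ∧ k₁ ≤ m ∧ m ≤ k₂ ∧ r = Pre.num m}

/-- `Term.vals opFun v ts rs` : the tuple `rs` of precomputed terms is a tuple of
values of the tuple `ts` of terms (componentwise). -/
def Term.vals {C O : Type} (opFun : O → List ℤ → Option ℤ) (v : Val C) :
    List (Term C O) → List (Pre C) → Prop
  | [], rs => rs = []
  | t :: ts, rs => ∃ r rs', rs = r :: rs' ∧ r ∈ Term.val opFun v t ∧ Term.vals opFun v ts rs'
end

mutual
/-- Embedding of precomputed terms into terms. -/
def Pre.toTerm {C O : Type} : Pre C → Term C O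
  | .inf => .inf
  | .sup => .sup
  | .num n => .num n
  | .sym c => .sym c
  | .app f rs => .app f (Pre.toTermL rs)

def Pre.toTermL {C O : Type} : List (Pre C) → List (Term C O)
  | [] => []
  | r :: rs => Pre.toTerm r :: Pre.toTermL rs
end


/-! ### Formulas with aggregates -/

mutual
/-- Arguments of the extended (aggregate) language. -/
inductive AArg (C O A : Type) : Type where
  | num (n : ℤ)
  | sym (c : C)
  | var (x : ℕ)
  | inf
  | sup
  | app (f : C) (args : List (AArg C O A))
  | agg (a : A) (xs : List ℕ) (F : AFml C O A)

/-- Formulas of the extended (aggregate) first-order language over the domain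
of precomputed terms. -/
inductive AFml (C O A : Type) : Type where
  | atom (p : C) (args : List (AArg C O A))
  | cmp (rel : Rel) (a₁ a₂ : AArg C O A)
  | mem (a : AArg C O A) (t : Term C O)
  | bot
  | impl (F G : AFml C O A)
  | all (x : ℕ) (F : AFml C O A)
end

section Sem
variable {C O A : Type}
variable (opFun : O → List ℤ → Option ℤ)
variable (aggFun : A → Set (List (Pre C)) → Pre C)
variable (lt : Pre C → Pre C → Prop)

mutual
/-- The precomputed term denoted by an argument (joint recursion with `AFml.sat`). -/
def AArg.eval (I : Interp C) : Val C → AArg C O A → Pre C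
  | _, .num n => Pre.num n
  | _, .sym c => Pre.sym c
  | v, .var x => v x
  | _, .inf => Pre.inf
  | _, .sup => Pre.sup
  | v, .app f args => Pre.app f (AArg.evalL I v args)
  | v, .agg a xs F => aggFun a
      {rs : List (Pre C) | rs.length = xs.length ∧ AFml.sat I (updList v xs rs) F}

def AArg.evalL (I : Interp C) : Val C → List (AArg C O A) → List (Pre C)
  | _, [] => []
  | v, a :: as => AArg.eval I v a :: AArg.evalL I v as

/-- Satisfaction of a formula by an interpretation `I` under a valuation `v`. -/
def AFml.sat (I : Interp C) : Val C → AFml C O A → Prop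
  | v, .atom p args => (p, AArg.evalL I v args) ∈ I
  | v, .cmp rel a₁ a₂ => Rel.eval lt rel (AArg.eval I v a₁) (AArg.eval I v a₂)
  | v, .mem a t => AArg.eval I v a ∈ Term.val opFun v t
  | _, .bot => False
  | v, .impl F G => AFml.sat I v F → AFml.sat I v G
  | v, .all x F => ∀ r : Pre C, AFml.sat I (Function.update v x r) F
end

end Sem
/-! ### Infinitary propositional formulas -/

/-- Infinitary propositional formulas over a type `α` of atoms: atoms, `⊥`,
conjunctions and disjunctions of arbitrary families of formulas, implication. -/
inductive IForm (α : Type) : Type 1 where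
  | atom (a : α)
  | bot
  | conj (ι : Type) (f : ι → IForm α)
  | disj (ι : Type) (f : ι → IForm α)
  | impl (F G : IForm α)

namespace IForm

variable {α : Type}

/-- `⊤` as the empty conjunction. -/
def top : IForm α := conj Empty (fun e => e.elim)
def neg (F : IForm α) : IForm α := impl F bot
def and (F G : IForm α) : IForm α := conj Bool (fun b => cond b F G)
def or (F G : IForm α) : IForm α := disj Bool (fun b => cond b F G)
def conjList (l : List (IForm α)) : IForm α := conj (Fin l.length) (fun i => l.get i)

/-- Classical satisfaction of infinitary formulas. -/
def sat (I : Set α) : IForm α → Prop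
  | atom a => a ∈ I
  | bot => False
  | conj _ f => ∀ i, sat I (f i)
  | disj _ f => ∃ i, sat I (f i)
  | impl F G => sat I F → sat I G

open Classical in
/-- The Ferraris reduct of an infinitary formula relative to an interpretation:
every (maximal) subformula not satisfied by `I` is replaced by `⊥`. -/
noncomputable def reduct (I : Set α) : IForm α → IForm α
  | atom a => if a ∈ I then atom a else bot
  | bot => bot
  | conj ι f => conj ι (fun i => reduct I (f i))
  | disj ι f => disj ι (fun i => reduct I (f i))
  | impl F G => if sat I (impl F G) then impl (reduct I F) (reduct I G) else bot

/-- `I` is a stable model of `F` (Ferraris semantics for infinitary formulas):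
`I` is a minimal model of the reduct `F^I`. -/
def stable (I : Set α) (F : IForm α) : Prop :=
  sat I (reduct I F) ∧ ∀ J : Set α, J ⊆ I → sat J (reduct I F) → J = I

/-- Satisfaction in the infinitary logic of here-and-there `HT^∞`, for an
HT-interpretation given by `J ⊆ I` ("here" `J`, "there" `I`). -/
def satHT (J I : Set α) : IForm α → Prop
  | atom a => a ∈ J
  | bot => False
  | conj _ f => ∀ i, satHT J I (f i)
  | disj _ f => ∃ i, satHT J I (f i)
  | impl F G => (satHT J I F → satHT J I G) ∧ (sat I F → sat I G)

/-- Strong equivalence of infinitary formulas, i.e. equivalence in `HT^∞`. -/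
def HTEquiv (F G : IForm α) : Prop :=
  ∀ J I : Set α, J ⊆ I → (satHT J I F ↔ satHT J I G) ∧ (sat I F ↔ sat I G)

mutual
/-- Positive nonnegated atoms of an infinitary formula. -/
def Pnn : IForm α → Set α
  | atom a => {a}
  | bot => ∅
  | conj _ f => ⋃ i, Pnn (f i)
  | disj _ f => ⋃ i, Pnn (f i)
  | impl _ bot => ∅
  | impl G H => Nnn G ∪ Pnn H

/-- Negative nonnegated atoms of an infinitary formula. -/
def Nnn : IForm α → Set α
  | atom _ => ∅
  | bot => ∅
  | conj _ f => ⋃ i, Nnn (f i)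
  | disj _ f => ⋃ i, Nnn (f i)
  | impl _ bot => ∅
  | impl G H => Pnn G ∪ Nnn H
end

end IForm

/-! ### Infinitary programs -/

/-- An infinitary rule `F → A`. -/
structure IRule (α : Type) : Type 1 where
  body : IForm α
  head : α

/-- An infinitary program: a conjunction (represented as a set) of infinitary rules. -/
abbrev IProg (α : Type) := Set (IRule α)

def IRule.toForm {α : Type} (r : IRule α) : IForm α := .impl r.body (.atom r.head)

namespace IProg
variable {α : Type}

/-- `I` satisfies the program (i.e., the conjunction of its rules). -/
def sat (I : Set α) (P : IProg α) : Prop := ∀ r ∈ P, IForm.sat I r.toForm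

/-- `I` is a stable model of the program, i.e., of the conjunction of its rules:
`I` is a minimal model of the reduct of that conjunction. -/
def stable (I : Set α) (P : IProg α) : Prop :=
  (∀ r ∈ P, IForm.sat I (IForm.reduct I r.toForm)) ∧
  ∀ J : Set α, J ⊆ I → (∀ r ∈ P, IForm.sat J (IForm.reduct I r.toForm)) → J = I

/-- `I` is supported by the program. -/
def supported (I : Set α) (P : IProg α) : Prop :=
  ∀ a ∈ I, ∃ r ∈ P, r.head = a ∧ IForm.sat I r.body

/-- `I` satisfies the completion of `P`, with signature (set of atoms) `S`:
the conjunction over all atoms `A ∈ S` of `A ↔ ⋁ (P|_A)`. -/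
def satCompletionOn (S : Set α) (I : Set α) (P : IProg α) : Prop :=
  ∀ a ∈ S, (a ∈ I ↔ ∃ r ∈ P, r.head = a ∧ IForm.sat I r.body)

/-- `B` is a parent of `A` relative to `P` and `I`. -/
def parent (P : IProg α) (I : Set α) (B A : α) : Prop :=
  A ∈ I ∧ B ∈ I ∧ ∃ r ∈ P, r.head = A ∧ IForm.sat I r.body ∧ B ∈ IForm.Pnn r.body

/-- `P` is tight on `I`: there is no infinite sequence of elements of `I` in
which each element is followed by one of its parents. -/
def tightOn (P : IProg α) (I : Set α) : Prop :=
  ¬ ∃ f : ℕ → α, (∀ i, f i ∈ I) ∧ ∀ i, parent P I (f (i + 1)) (f i)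

end IProg
/-! ### Programs -/

/-- A literal: an atom `p(t₁,…,tₙ)` (`pos = true`) or such an atom preceded
by `not` (`pos = false`). -/
structure Lit (C O : Type) : Type where
  pos : Bool
  pred : C
  args : List (Term C O)

/-- A comparison `t₁ ≺ t₂`. -/
structure Comp (C O : Type) : Type where
  rel : Rel
  lhs : Term C O
  rhs : Term C O

/-- An element of the condition of an aggregate expression: a literal or comparison. -/
abbrev CondElem (C O : Type) := Lit C O ⊕ Comp C O

def Lit.varList {C O : Type} (l : Lit C O) : List ℕ := Term.varListL l.args
def Comp.varList {C O : Type} (c : Comp C O) : List ℕ := c.lhs.varList ++ c.rhs.varList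
def CondElem.varList {C O : Type} : CondElem C O → List ℕ :=
  Sum.elim Lit.varList Comp.varList

/-- An aggregate expression `α{t : C} ≺ s`, where `s` is a variable or a
precomputed term. -/
structure AggExpr (C O A : Type) : Type where
  name : A
  ts : List (Term C O)
  cond : List (CondElem C O)
  rel : Rel
  bound : ℕ ⊕ Pre C

def AggExpr.lhsVarList {C O A : Type} (E : AggExpr C O A) : List ℕ :=
  Term.varListL E.ts ++ E.cond.flatMap CondElem.varList

def boundVarList {C : Type} : ℕ ⊕ Pre C → List ℕ
  | .inl x => [x]
  | .inr _ => []

def AggExpr.varList {C O A : Type} (E : AggExpr C O A) : List ℕ :=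
  E.lhsVarList ++ boundVarList E.bound

/-- An aggregate expression is closed if its bound `s` is ground
(i.e., a precomputed term). -/
def AggExpr.ClosedBound {C O A : Type} (E : AggExpr C O A) : Prop :=
  ∃ r : Pre C, E.bound = Sum.inr r

/-- A conjunctive term of a rule body. -/
inductive BElem (C O A : Type) : Type where
  | lit (l : Lit C O)
  | comp (c : Comp C O)
  | agg (E : AggExpr C O A)

def BElem.varList {C O A : Type} : BElem C O A → List ℕ
  | .lit l => l.varList
  | .comp c => c.varList
  | .agg E => E.varList

/-- A body element suitable for the translation `τ`: a ground literal,
a ground comparison, or a closed aggregate expression. -/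
def BElem.ClosedC {C O A : Type} : BElem C O A → Prop
  | .lit l => l.varList = []
  | .comp c => c.varList = []
  | .agg E => E.ClosedBound

/-- The head of a rule. -/
inductive Head (C O : Type) : Type where
  | basic (p : C) (ts : List (Term C O))
  | choice (p : C) (ts : List (Term C O))
  | empty

def Head.varList {C O : Type} : Head C O → List ℕ
  | .basic _ ts => Term.varListL ts
  | .choice _ ts => Term.varListL ts
  | .empty => []

/-- A rule `Head ← Body`. -/
structure Rule (C O A : Type) : Type where
  head : Head C O
  body : List (BElem C O A)

def Rule.varList {C O A : Type} (R : Rule C O A) : List ℕ :=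
  R.head.varList ++ R.body.flatMap BElem.varList

/-- The variables with an occurrence in the rule outside the left-hand sides
`α{t : C}` of aggregate expressions (head, literal and comparison conjuncts,
and bounds of aggregate expressions); these are the global variables. -/
def Rule.globalList {C O A : Type} (R : Rule C O A) : List ℕ :=
  (R.head.varList ++ R.body.flatMap (fun b =>
    match b with
    | .lit l => l.varList
    | .comp c => c.varList
    | .agg E => boundVarList E.bound)).dedup

/-- The local variables of a rule: those occurring in the rule, all of whose
occurrences are inside left-hand sides of aggregate expressions of its body. -/
def Rule.localList {C O A : Type} (R : Rule C O A) : List ℕ :=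
  ((R.body.flatMap (fun b =>
    match b with
    | .agg E => E.lhsVarList
    | _ => [])).dedup).filter (fun x => x ∉ R.globalList)

/-- A rule is closed if all its variables are local. -/
def Rule.Closed {C O A : Type} (R : Rule C O A) : Prop := R.globalList = []

/-! ### Predicate symbol occurrences, vocabulary, dependency graph -/

def Lit.hasPred {C O : Type} (p : C) (n : ℕ) (l : Lit C O) : Prop :=
  l.pred = p ∧ l.args.length = n

def CondElem.hasPred {C O : Type} (p : C) (n : ℕ) : CondElem C O → Prop
  | .inl l => l.hasPred p n
  | .inr _ => False

def AggExpr.hasPred {C O A : Type} (p : C) (n : ℕ) (E : AggExpr C O A) : Prop :=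
  ∃ ce ∈ E.cond, CondElem.hasPred p n ce

/-- The predicate symbol `p/n` occurs in a body element. -/
def BElem.hasPred {C O A : Type} (p : C) (n : ℕ) : BElem C O A → Prop
  | .lit l => l.hasPred p n
  | .comp _ => False
  | .agg E => E.hasPred p n

/-- The predicate symbol `p/n` occurs in a positive literal or in an aggregate
expression (condition (ii′)). -/
def BElem.hasPosOrAggPred {C O A : Type} (p : C) (n : ℕ) : BElem C O A → Prop
  | .lit l => l.pos = true ∧ l.hasPred p n
  | .comp _ => False
  | .agg E => E.hasPred p n

def Head.hasPred {C O : Type} (p : C) (n : ℕ) : Head C O → Prop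
  | .basic q ts => q = p ∧ ts.length = n
  | .choice q ts => q = p ∧ ts.length = n
  | .empty => False

/-- The predicate symbol `p/n` occurs in the rule `R`. -/
def Rule.hasPredSym {C O A : Type} (p : C) (n : ℕ) (R : Rule C O A) : Prop :=
  R.head.hasPred p n ∨ ∃ e ∈ R.body, BElem.hasPred p n e

/-- The vocabulary of a program: all atoms `p(r)` with `r` a tuple of `n`
precomputed terms and `p/n` occurring in the program. -/
def vocab {C O A : Type} (Γ : Set (Rule C O A)) : Set (EGAtom C) :=
  {a | ∃ R ∈ Γ, Rule.hasPredSym a.1 a.2.length R}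

/-- The edge relation of the dependency graph `G_Γ` on predicate symbols. -/
def DepEdge {C O A : Type} (Γ : Set (Rule C O A)) (q p : C × ℕ) : Prop :=
  ∃ R ∈ Γ, R.head.hasPred q.1 q.2 ∧ ∃ e ∈ R.body, BElem.hasPosOrAggPred p.1 p.2 e

/-- A program is tight if its dependency graph is acyclic. -/
def EGTight {C O A : Type} (Γ : Set (Rule C O A)) : Prop :=
  ∀ s : C × ℕ, ¬ Relation.TransGen (DepEdge Γ) s s


/-! ### Embeddings and aggregate-freeness -/

mutual
/-- Embedding of precomputed terms into arguments of the extended language. -/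
def Pre.toAArg {C O A : Type} : Pre C → AArg C O A
  | .inf => .inf
  | .sup => .sup
  | .num n => .num n
  | .sym c => .sym c
  | .app f rs => .app f (Pre.toAArgL rs)

def Pre.toAArgL {C O A : Type} : List (Pre C) → List (AArg C O A)
  | [] => []
  | r :: rs => Pre.toAArg r :: Pre.toAArgL rs
end

mutual
/-- The number of occurrences of aggregate names in an argument;
an argument is aggregate-free iff this is `0`. -/
def AArg.countAgg {C O A : Type} : AArg C O A → ℕ
  | .num _ => 0
  | .sym _ => 0
  | .var _ => 0
  | .inf => 0
  | .sup => 0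
  | .app _ args => AArg.countAggL args
  | .agg _ _ F => F.countAgg + 1

def AArg.countAggL {C O A : Type} : List (AArg C O A) → ℕ
  | [] => 0
  | a :: as => a.countAgg + AArg.countAggL as

def AFml.countAgg {C O A : Type} : AFml C O A → ℕ
  | .atom _ args => AArg.countAggL args
  | .cmp _ a₁ a₂ => a₁.countAgg + a₂.countAgg
  | .mem a _ => a.countAgg
  | .bot => 0
  | .impl F G => F.countAgg + G.countAgg
  | .all _ F => F.countAgg
end

/-- An argument contains no aggregate names. -/
def AArg.AggFree {C O A : Type} (a : AArg C O A) : Prop := a.countAgg = 0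

mutual
/-- An aggregate-free argument, viewed as a term (the `agg` case is junk and
is never relevant for aggregate-free arguments). -/
def AArg.toTerm {C O A : Type} : AArg C O A → Term C O
  | .num n => .num n
  | .sym c => .sym c
  | .var x => .var x
  | .inf => .inf
  | .sup => .sup
  | .app f args => .app f (AArg.toTermL args)
  | .agg _ _ _ => .inf

def AArg.toTermL {C O A : Type} : List (AArg C O A) → List (Term C O)
  | [] => []
  | a :: as => a.toTerm :: AArg.toTermL as
end

/-! ### Abbreviated connectives of the extended first-order language -/

namespace AFml
variable {C O A : Type}

def negF (F : AFml C O A) : AFml C O A := .impl F .bot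
def topF : AFml C O A := negF .bot
def andF (F G : AFml C O A) : AFml C O A := .impl (.impl F (.impl G .bot)) .bot
def orF (F G : AFml C O A) : AFml C O A := .impl (negF F) G
def iffF (F G : AFml C O A) : AFml C O A := andF (.impl F G) (.impl G F)
def exF (x : ℕ) (F : AFml C O A) : AFml C O A := negF (.all x (negF F))
def andList (l : List (AFml C O A)) : AFml C O A := l.foldr andF topF
def orList (l : List (AFml C O A)) : AFml C O A := l.foldr orF .bot
def exList (xs : List ℕ) (F : AFml C O A) : AFml C O A := xs.foldr exF F
def allList (xs : List ℕ) (F : AFml C O A) : AFml C O A := xs.foldr .all F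

end AFml

/-! ### The translation φ (formula representations) -/

/-- A variable index strictly greater than every element of `l`
(used to pick new/fresh variables). -/
def freshVar (l : List ℕ) : ℕ := l.foldr max 0 + 1

/-- The bound `s` of an aggregate expression, as a term. -/
def boundTerm {C O : Type} : ℕ ⊕ Pre C → Term C O
  | .inl x => .var x
  | .inr r => r.toTerm

section Phi
variable {C O A : Type}

/-- `φ` of a literal: `∃X(X ∈ t ∧ p(X))`, resp. `∃X(X ∈ t ∧ ¬p(X))`,
with `X` a tuple of new variables. -/
def phiLit (l : Lit C O) : AFml C O A :=
  let n := freshVar l.varList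
  let ws := (List.range l.args.length).map (· + n)
  AFml.exList ws (AFml.andF
    (AFml.andList ((ws.zip l.args).map (fun q => AFml.mem (AArg.var q.1) q.2)))
    (if l.pos then AFml.atom l.pred (ws.map AArg.var)
     else AFml.negF (AFml.atom l.pred (ws.map AArg.var))))

/-- `φ` of a comparison: `∃X₁X₂(X₁ ∈ t₁ ∧ X₂ ∈ t₂ ∧ X₁ ≺ X₂)`. -/
def phiComp (c : Comp C O) : AFml C O A :=
  let n := freshVar c.varList
  AFml.exF n (AFml.exF (n + 1) (AFml.andF (AFml.mem (AArg.var n) c.lhs)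
    (AFml.andF (AFml.mem (AArg.var (n + 1)) c.rhs)
      (AFml.cmp c.rel (AArg.var n) (AArg.var (n + 1))))))

def phiCondElem : CondElem C O → AFml C O A :=
  Sum.elim phiLit phiComp

/-- `φ` of a conjunction of literals and comparisons. -/
def phiCond (cond : List (CondElem C O)) : AFml C O A :=
  AFml.andList (cond.map phiCondElem)

/-- `φ^X` of an aggregate expression `α{t : C} ≺ s` (with `X = xs` the
variables treated as local):
`∃Y(α{Z | ∃X(Z ∈ t ∧ φC)} ≺ Y ∧ Y ∈ s)`, with `Z`, `Y` new variables. -/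
def phiAgg (xs : List ℕ) (E : AggExpr C O A) : AFml C O A :=
  let n := freshVar (xs ++ E.varList)
  let zs := (List.range E.ts.length).map (· + (n + 1))
  AFml.exF n (AFml.andF
    (AFml.cmp E.rel
      (AArg.agg E.name zs
        (AFml.exList xs (AFml.andF
          (AFml.andList ((zs.zip E.ts).map (fun q => AFml.mem (AArg.var q.1) q.2)))
          (phiCond E.cond))))
      (AArg.var n))
    (AFml.mem (AArg.var n) (boundTerm E.bound)))

/-- `φ^X` of a body element, where `xs` is the list of variables treated as local. -/
def phiBElem (xs : List ℕ) : BElem C O A → AFml C O A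
  | .lit l => phiLit l
  | .comp c => phiComp c
  | .agg E => phiAgg xs E

/-- `φ^X` of a body (a conjunction of literals, comparisons and aggregate
expressions), where `xs` is the list of variables treated as local. -/
def phiBody (xs : List ℕ) (b : List (BElem C O A)) : AFml C O A :=
  AFml.andList (b.map (phiBElem xs))

/-- The formula representation of a constraint `← Body`: `¬ φ^X(Body)`,
where `X` is the list of local variables of the constraint. -/
def phiConstraintRep (R : Rule C O A) : AFml C O A :=
  AFml.negF (phiBody R.localList R.body)

/-- `V ∈ t` for a tuple `V` of variables and a tuple `t` of terms. -/
def memConj (Vs : List ℕ) (ts : List (Term C O)) : AFml C O A :=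
  AFml.andList ((Vs.zip ts).map (fun q => AFml.mem (AArg.var q.1) q.2))

/-- The antecedent `Fᵢ` of the formula representation `Fᵢ → p(V)` of a basic or
choice rule, where `Vs` is the chosen tuple `V` of new variables:
for a basic rule `V ∈ t ∧ φ^X(Body)`, for a choice rule
`V ∈ t ∧ φ^X(Body) ∧ p(V)`, with `X` the local variables of the rule. -/
def ruleAnte (Vs : List ℕ) (R : Rule C O A) : AFml C O A :=
  match R.head with
  | .basic _ ts => AFml.andF (memConj Vs ts) (phiBody R.localList R.body)
  | .choice p ts => AFml.andF (memConj Vs ts)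
      (AFml.andF (phiBody R.localList R.body) (AFml.atom p (Vs.map AArg.var)))
  | .empty => AFml.bot

/-- Does `R` belong to the definition of `p/n` (a basic or choice rule whose
head is of the form `p(t₁,…,tₙ)` or `{p(t₁,…,tₙ)}`)? -/
def definesB [DecidableEq C] (p : C) (n : ℕ) (R : Rule C O A) : Bool :=
  match R.head with
  | .basic q ts => decide (q = p ∧ ts.length = n)
  | .choice q ts => decide (q = p ∧ ts.length = n)
  | .empty => false

/-- The completed definition of the predicate symbol `p/n` in the finite
program `Γ`: `∀V(p(V) ↔ ⋁ᵢ ∃Uᵢ Fᵢ)`, where the `Fᵢ` come from the formula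
representations of the rules defining `p/n`, `V` is a tuple of new variables
chosen in the same way for all `i`, and `Uᵢ` is the list of free variables of
`Fᵢ` not in `V` (i.e., the global variables of the corresponding rule). -/
def completedDef [DecidableEq C] (Γ : List (Rule C O A)) (p : C) (n : ℕ) : AFml C O A :=
  let base := freshVar (Γ.flatMap Rule.varList)
  let Vs := (List.range n).map (· + base)
  AFml.allList Vs (AFml.iffF (AFml.atom p (Vs.map AArg.var))
    (AFml.orList ((Γ.filter (definesB p n)).map
      (fun R => AFml.exList R.globalList (ruleAnte Vs R)))))

end Phi

/-! ### The translation τ (grounding into infinitary formulas) -/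

section Tau
variable {C O A : Type}
variable (opFun : O → List ℤ → Option ℤ)
variable (aggFun : A → Set (List (Pre C)) → Pre C)
variable (lt : Pre C → Pre C → Prop)

/-- `τ` of a (ground instance of a) literal: `⋁_{r ∈ [t]} p(r)`, resp.
`⋁_{r ∈ [t]} ¬p(r)`; variables are evaluated by the valuation `v`. -/
def tauLit (v : Val C) (l : Lit C O) : IForm (EGAtom C) :=
  if l.pos then
    .disj {rs : List (Pre C) // Term.vals opFun v l.args rs}
      (fun rs => .atom (l.pred, rs.val))
  else
    .disj {rs : List (Pre C) // Term.vals opFun v l.args rs}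
      (fun rs => .neg (.atom (l.pred, rs.val)))

open Classical in
/-- `τ` of a (ground instance of a) comparison: `⊤` if the relation holds
between some values of the two terms, `⊥` otherwise. -/
noncomputable def tauComp (v : Val C) (c : Comp C O) : IForm (EGAtom C) :=
  if ∃ r₁ ∈ Term.val opFun v c.lhs, ∃ r₂ ∈ Term.val opFun v c.rhs,
      Rel.eval lt c.rel r₁ r₂
  then .top else .bot

noncomputable def tauCondElem (v : Val C) : CondElem C O → IForm (EGAtom C)
  | .inl l => tauLit opFun v l
  | .inr c => tauComp opFun lt v c

/-- `τ` of a conjunction of (ground instances of) literals and comparisons. -/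
noncomputable def tauCond (v : Val C) (cond : List (CondElem C O)) : IForm (EGAtom C) :=
  IForm.conjList (cond.map (tauCondElem opFun lt v))

/-- The value of the bound `s` of an aggregate expression under a valuation. -/
def boundVal (v : Val C) : ℕ ⊕ Pre C → Pre C
  | .inl x => v x
  | .inr r => r

/-- Tuples of precomputed terms matching the variable list `xs`. -/
def AggTuple (C : Type) (xs : List ℕ) : Type := {rs : List (Pre C) // rs.length = xs.length}

/-- `Δ` justifies the aggregate expression `E` (relative to the valuation `v`
and the list `xs` of its variables): `≺` holds between `α̂([Δ])` and `s`,
where `[Δ]` is the union of the value sets of the instantiated tuples `t`. -/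
def Justifies (v : Val C) (xs : List ℕ) (E : AggExpr C O A)
    (Δ : Set (AggTuple C xs)) : Prop :=
  Rel.eval lt E.rel
    (aggFun E.name
      {q | ∃ rs ∈ Δ, Term.vals opFun (updList v xs rs.val) E.ts q})
    (boundVal v E.bound)

/-- `τ` of a closed aggregate expression `E`, relative to the list `xs` of its
variables: the conjunction, over all subsets `Δ` of the set `A` of tuples of
precomputed terms matching `xs` that do not justify `E`, of the implications
`(⋀_{r∈Δ} τ(C^X_r)) → (⋁_{r∈A∖Δ} τ(C^X_r))`. -/
noncomputable def tauAgg (v : Val C) (xs : List ℕ) (E : AggExpr C O A) :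
    IForm (EGAtom C) :=
  .conj {Δ : Set (AggTuple C xs) // ¬ Justifies opFun aggFun lt v xs E Δ}
    (fun Δ => .impl
      (.conj {rs : AggTuple C xs // rs ∈ Δ.val}
        (fun rs => tauCond opFun lt (updList v xs rs.val.val) E.cond))
      (.disj {rs : AggTuple C xs // rs ∉ Δ.val}
        (fun rs => tauCond opFun lt (updList v xs rs.val.val) E.cond)))

/-- `τ` of a closed aggregate expression, with `X` the list of variables
occurring in it. -/
noncomputable def tauAggE (v : Val C) (E : AggExpr C O A) : IForm (EGAtom C) :=
  tauAgg opFun aggFun lt v (E.varList.dedup) E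

/-- `τ` of a body element of (an instance of) a rule whose list of local
variables is `loc`; in the instance, the variables occurring in an aggregate
expression `E` are the variables of `E` that are local in the rule. -/
noncomputable def tauBElem (v : Val C) (loc : List ℕ) : BElem C O A → IForm (EGAtom C)
  | .lit l => tauLit opFun v l
  | .comp c => tauComp opFun lt v c
  | .agg E => tauAgg opFun aggFun lt v (E.varList.dedup.filter (· ∈ loc)) E

/-- `τ` of the body of (an instance of) a rule with local variable list `loc`. -/
noncomputable def tauBody (v : Val C) (loc : List ℕ) (b : List (BElem C O A)) :
    IForm (EGAtom C) :=
  IForm.conjList (b.map (tauBElem opFun aggFun lt v loc))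

/-- `τ` of (an instance, given by the valuation `v`, of) a rule. -/
noncomputable def tauRule (v : Val C) (R : Rule C O A) : IForm (EGAtom C) :=
  match R.head with
  | .basic p ts => .impl (tauBody opFun aggFun lt v R.localList R.body)
      (.conj {rs : List (Pre C) // Term.vals opFun v ts rs}
        (fun rs => .atom (p, rs.val)))
  | .choice p ts => .impl (tauBody opFun aggFun lt v R.localList R.body)
      (.conj {rs : List (Pre C) // Term.vals opFun v ts rs}
        (fun rs => .or (.atom (p, rs.val)) (.neg (.atom (p, rs.val)))))
  | .empty => .neg (tauBody opFun aggFun lt v R.localList R.body)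

/-- `τΓ`: the conjunction of `τR` over all instances `R` of the rules of `Γ`
(instances given by valuations of the global variables). -/
noncomputable def tauProg (Γ : Set (Rule C O A)) : IForm (EGAtom C) :=
  .conj ({R : Rule C O A // R ∈ Γ} × Val C)
    (fun z => tauRule opFun aggFun lt z.2 z.1.val)

/-- Stable models of an EG program: stable models of `τΓ`. -/
noncomputable def EGStable (I : Interp C) (Γ : Set (Rule C O A)) : Prop :=
  IForm.stable I (tauProg opFun aggFun lt Γ)

/-- The infinitary program `τ₁Γ`: the rules `τ(Body) → p(r)` for all instances
of basic rules of `Γ` and all `r ∈ [t]`, together with the rules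
`τ(Body) ∧ ¬¬p(r) → p(r)` for all instances of choice rules and all `r ∈ [t]`. -/
noncomputable def tau1 (Γ : Set (Rule C O A)) : IProg (EGAtom C) :=
  {ir | ∃ R ∈ Γ, ∃ v : Val C,
    (∃ p ts rs, R.head = Head.basic p ts ∧ Term.vals opFun v ts rs ∧
      ir = ⟨tauBody opFun aggFun lt v R.localList R.body, (p, rs)⟩) ∨
    (∃ p ts rs, R.head = Head.choice p ts ∧ Term.vals opFun v ts rs ∧
      ir = ⟨IForm.and (tauBody opFun aggFun lt v R.localList R.body)
              (IForm.neg (IForm.neg (IForm.atom (p, rs)))), (p, rs)⟩)}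

/-- The infinitary formula `τ₂Γ`: the conjunction of `¬τ(C)` over all
instances `← C` of the constraints of `Γ`. -/
noncomputable def tau2 (Γ : Set (Rule C O A)) : IForm (EGAtom C) :=
  .conj ({R : Rule C O A // R ∈ Γ ∧ R.head = Head.empty} × Val C)
    (fun z => .neg (tauBody opFun aggFun lt z.2 z.1.val.localList z.1.val.body))

/-- `τ` of a closed conjunction of ground literals, ground comparisons and
closed aggregate expressions (each aggregate expression translated relative
to the list of its own variables). -/
noncomputable def tauBElemC (v : Val C) : BElem C O A → IForm (EGAtom C)
  | .lit l => tauLit opFun v l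
  | .comp c => tauComp opFun lt v c
  | .agg E => tauAggE opFun aggFun lt v E

noncomputable def tauBodyC (v : Val C) (b : List (BElem C O A)) : IForm (EGAtom C) :=
  IForm.conjList (b.map (tauBElemC opFun aggFun lt v))

end Tau

/-! ### Completion of an EG program -/

section Completion
variable {C O A : Type}
variable (opFun : O → List ℤ → Option ℤ)
variable (aggFun : A → Set (List (Pre C)) → Pre C)
variable (lt : Pre C → Pre C → Prop)

/-- `I` satisfies the completion of the finite program `Γ`: the completed
definitions of all predicate symbols occurring in `Γ` together with the
universal closures of the formula representations of all constraints of `Γ`. -/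
def SatCompletion [DecidableEq C] (Γ : List (Rule C O A)) (I : Interp C) : Prop :=
  (∀ (p : C) (n : ℕ), (∃ R ∈ Γ, Rule.hasPredSym p n R) →
    ∀ v : Val C, AFml.sat opFun aggFun lt I v (completedDef Γ p n)) ∧
  (∀ R ∈ Γ, R.head = Head.empty →
    ∀ v : Val C, AFml.sat opFun aggFun lt I v (phiConstraintRep R))

end Completion

/-! ### Auxiliary: infinitary formula infrastructure -/

namespace IForm
variable {α : Type}

/-- The set of atoms occurring in an infinitary formula. -/
def atomsOf : IForm α → Set α
  | atom a => {a}
  | bot => ∅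
  | conj _ f => ⋃ i, atomsOf (f i)
  | disj _ f => ⋃ i, atomsOf (f i)
  | impl F G => atomsOf F ∪ atomsOf G

theorem sat_congr {I J : Set α} : ∀ {F : IForm α},
    (∀ a ∈ atomsOf F, (a ∈ I ↔ a ∈ J)) → (sat I F ↔ sat J F) := by
  intro F
  induction F with
  | atom a => intro h; exact h a (by simp [atomsOf])
  | bot => intro _; exact Iff.rfl
  | conj ι f ih =>
      intro h
      exact forall_congr' fun i => ih i fun a ha => h a (Set.mem_iUnion.2 ⟨i, ha⟩)
  | disj ι f ih =>
      intro h
      exact exists_congr fun i => ih i fun a ha => h a (Set.mem_iUnion.2 ⟨i, ha⟩)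
  | impl F G ihF ihG =>
      intro h
      exact imp_congr (ihF fun a ha => h a (Or.inl ha)) (ihG fun a ha => h a (Or.inr ha))

theorem atomsOf_reduct_subset (I : Set α) : ∀ F : IForm α, atomsOf (reduct I F) ⊆ atomsOf F := by
  intro F
  induction F with
  | atom a =>
      by_cases h : a ∈ I <;> simp [reduct, h, atomsOf]
  | bot => simp [reduct]
  | conj ι f ih =>
      simp only [reduct, atomsOf]
      exact Set.iUnion_mono ih
  | disj ι f ih =>
      simp only [reduct, atomsOf]
      exact Set.iUnion_mono ih
  | impl F G ihF ihG =>
      by_cases h : sat I (impl F G)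
      · simp only [reduct, if_pos h, atomsOf]
        exact Set.union_subset_union ihF ihG
      · simp [reduct, if_neg h, atomsOf]

theorem sat_reduct_iff (I : Set α) : ∀ F : IForm α, (sat I (reduct I F) ↔ sat I F) := by
  intro F
  induction F with
  | atom a => by_cases h : a ∈ I <;> simp [reduct, h, sat]
  | bot => exact Iff.rfl
  | conj ι f ih => exact forall_congr' fun i => ih i
  | disj ι f ih => exact exists_congr fun i => ih i
  | impl F G ihF ihG =>
      by_cases h : sat I (impl F G)
      · rw [reduct, if_pos h]
        show (sat I (reduct I F) → sat I (reduct I G)) ↔ _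
        exact imp_congr ihF ihG
      · simp only [reduct, if_neg h]
        simp only [sat]
        exact iff_of_false (fun x => x) h

theorem sat_of_sat_reduct {I J : Set α} (hJI : J ⊆ I) :
    ∀ {F : IForm α}, sat J (reduct I F) → sat I F := by
  intro F
  induction F with
  | atom a =>
      by_cases h : a ∈ I
      · simp [reduct, h, sat]
      · simp only [reduct, if_neg h]; exact fun hj => hj.elim
  | bot => exact fun hj => hj.elim
  | conj ι f ih => exact fun h i => ih i (h i)
  | disj ι f ih => exact fun ⟨i, hi⟩ => ⟨i, ih i hi⟩
  | impl F G ihF ihG =>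
      by_cases h : sat I (impl F G)
      · intro _; exact h
      · rw [reduct, if_neg h]; exact fun hj => hj.elim

@[simp] theorem sat_top (I : Set α) : sat I (top : IForm α) := by
  intro i; exact i.elim

@[simp] theorem sat_neg (I : Set α) (F : IForm α) : sat I (neg F) ↔ ¬ sat I F := Iff.rfl

@[simp] theorem sat_and (I : Set α) (F G : IForm α) :
    sat I (IForm.and F G) ↔ sat I F ∧ sat I G := by
  constructor
  · intro h; exact ⟨h true, h false⟩
  · rintro ⟨h1, h2⟩ b; cases b <;> simpa

@[simp] theorem sat_or (I : Set α) (F G : IForm α) :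
    sat I (IForm.or F G) ↔ sat I F ∨ sat I G := by
  constructor
  · rintro ⟨b, hb⟩; cases b
    · right; simpa using hb
    · left; simpa using hb
  · rintro (h | h)
    · exact ⟨true, by simpa⟩
    · exact ⟨false, by simpa⟩

theorem sat_conjList (I : Set α) (l : List (IForm α)) :
    sat I (conjList l) ↔ ∀ F ∈ l, sat I F := by
  constructor
  · intro h F hF
    rcases List.get_of_mem hF with ⟨i, rfl⟩
    exact h i
  · intro h i
    exact h _ (List.get_mem l i)

theorem atomsOf_conjList (l : List (IForm α)) :
    atomsOf (conjList l) = ⋃ F ∈ l, atomsOf F := by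
  ext a
  simp only [conjList, atomsOf, Set.mem_iUnion]
  constructor
  · rintro ⟨i, hi⟩; exact ⟨_, ⟨List.get_mem l i, hi⟩⟩
  · rintro ⟨F, hF, ha⟩
    rcases List.get_of_mem hF with ⟨i, rfl⟩
    exact ⟨i, ha⟩

end IForm

/-! ### Auxiliary: valuations -/

theorem updList_eq_of_not_mem {C : Type} (v : Val C) :
    ∀ (xs : List ℕ) (rs : List (Pre C)) (x : ℕ), x ∉ xs → updList v xs rs x = v x
  | [], _, _, _ => rfl
  | _ :: _, [], _, _ => rfl
  | y :: ys, r :: rs, x, h => by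
      simp only [updList]
      rw [Function.update_of_ne (by simp at h; exact h.1)]
      exact updList_eq_of_not_mem v ys rs x (by simp at h; exact h.2)

theorem updList_eq_of_mem_zip {C : Type} (v : Val C) :
    ∀ (xs : List ℕ) (rs : List (Pre C)) (x : ℕ) (r : Pre C), xs.Nodup →
      (x, r) ∈ xs.zip rs → updList v xs rs x = r
  | [], _, _, _, _, h => by simp at h
  | _ :: _, [], _, _, _, h => by simp at h
  | y :: ys, s :: rs, x, r, hnd, h => by
      simp only [List.zip_cons_cons, List.mem_cons] at h
      rcases h with h | h
      · injection h with h1 h2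
        subst h2
        rw [← h1]
        simp [updList]
      · have hx : x ∈ ys := (List.of_mem_zip h).1
        have hy : x ≠ y := fun he => (by simp at hnd; exact hnd.1 (he ▸ hx))
        simp only [updList]
        rw [Function.update_of_ne hy]
        exact updList_eq_of_mem_zip v ys rs x r (by simp at hnd; exact hnd.2) h

theorem updList_map {C : Type} (v : Val C) (xs : List ℕ) (g : ℕ → Pre C)
    (hnd : xs.Nodup) (x : ℕ) :
    updList v xs (xs.map g) x = if x ∈ xs then g x else v x := by
  split_ifs with h
  · refine updList_eq_of_mem_zip v xs (xs.map g) x (g x) hnd ?_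
    have : xs.zip (xs.map g) = xs.map (fun a => (a, g a)) := by
      have := List.zip_map' (f := fun a => a) (g := g) (l := xs)
      simpa using this
    rw [this]
    exact List.mem_map.2 ⟨x, h, rfl⟩
  · exact updList_eq_of_not_mem v xs (xs.map g) x h

theorem updList_update_comm {C : Type} (v : Val C) :
    ∀ (xs : List ℕ) (rs : List (Pre C)) (x : ℕ) (r : Pre C), x ∉ xs →
      updList (Function.update v x r) xs rs = Function.update (updList v xs rs) x r
  | [], _, _, _, _ => rfl
  | _ :: _, [], _, _, _ => rfl
  | y :: ys, s :: rs, x, r, h => by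
      simp only [updList]
      rw [updList_update_comm v ys rs x r (by simp at h; exact h.2)]
      exact Function.update_comm (by simp at h; exact fun he => h.1 he) _ _ _

theorem lt_freshVar {x : ℕ} : ∀ {l : List ℕ}, x ∈ l → x < freshVar l := by
  intro l hx
  have : x ≤ l.foldr max 0 := by
    induction l with
    | nil => simp at hx
    | cons y ys ih =>
        rcases List.mem_cons.1 hx with rfl | hmem
        · exact le_max_left _ _
        · exact le_trans (ih hmem) (le_max_right _ _)
  exact Nat.lt_succ_of_le this

/-! ### Auxiliary: term value lemmas -/

section TermLemmas
variable {C O : Type} (opFun : O → List ℤ → Option ℤ)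

mutual
theorem Term.val_congr (v₁ v₂ : Val C) :
    ∀ (t : Term C O), (∀ x ∈ t.varList, v₁ x = v₂ x) →
      Term.val opFun v₁ t = Term.val opFun v₂ t
  | .num _, _ => rfl
  | .sym _, _ => rfl
  | .var x, h => by
      simp only [Term.val]
      rw [h x (by simp [Term.varList])]
  | .inf, _ => rfl
  | .sup, _ => rfl
  | .app f ts, h => by
      simp only [Term.val]
      ext r
      simp only [Set.mem_setOf_eq]
      constructor <;> rintro ⟨rs, h1, rfl⟩ <;>
        exact ⟨rs, by
          first
          | exact (Term.vals_congr v₁ v₂ ts rs h).1 h1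
          | exact (Term.vals_congr v₁ v₂ ts rs h).2 h1, rfl⟩
  | .op o ts, h => by
      simp only [Term.val]
      ext r
      simp only [Set.mem_setOf_eq]
      constructor <;> rintro ⟨ks, h1, m, hm, rfl⟩ <;>
        exact ⟨ks, by
          first
          | exact (Term.vals_congr v₁ v₂ ts _ h).1 h1
          | exact (Term.vals_congr v₁ v₂ ts _ h).2 h1, m, hm, rfl⟩
  | .interval t₁ t₂, h => by
      have h1 : ∀ x ∈ t₁.varList, v₁ x = v₂ x := fun x hx =>
        h x (by simp [Term.varList]; exact Or.inl hx)
      have h2 : ∀ x ∈ t₂.varList, v₁ x = v₂ x := fun x hx =>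
        h x (by simp [Term.varList]; exact Or.inr hx)
      simp only [Term.val]
      rw [Term.val_congr v₁ v₂ t₁ h1, Term.val_congr v₁ v₂ t₂ h2]

theorem Term.vals_congr (v₁ v₂ : Val C) :
    ∀ (ts : List (Term C O)) (rs : List (Pre C)),
      (∀ x ∈ Term.varListL ts, v₁ x = v₂ x) →
      (Term.vals opFun v₁ ts rs ↔ Term.vals opFun v₂ ts rs)
  | [], _, _ => Iff.rfl
  | t :: ts, rs, h => by
      have ht : ∀ x ∈ t.varList, v₁ x = v₂ x := fun x hx =>
        h x (by simp [Term.varListL]; exact Or.inl hx)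
      have hts : ∀ x ∈ Term.varListL ts, v₁ x = v₂ x := fun x hx =>
        h x (by simp [Term.varListL]; exact Or.inr hx)
      simp only [Term.vals]
      constructor <;> rintro ⟨r, rs', rfl, hr, hrs⟩
      · exact ⟨r, rs', rfl, (Term.val_congr v₁ v₂ t ht) ▸ hr,
          (Term.vals_congr v₁ v₂ ts rs' hts).1 hrs⟩
      · exact ⟨r, rs', rfl, (Term.val_congr v₁ v₂ t ht) ▸ hr,
          (Term.vals_congr v₁ v₂ ts rs' hts).2 hrs⟩
end

mutual
theorem Pre.toTerm_val (v : Val C) :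
    ∀ r : Pre C, Term.val opFun v (Pre.toTerm (O := O) r) = {r}
  | .inf => rfl
  | .sup => rfl
  | .num _ => rfl
  | .sym _ => rfl
  | .app f rs => by
      simp only [Pre.toTerm, Term.val]
      ext q
      simp only [Set.mem_setOf_eq, Set.mem_singleton_iff]
      constructor
      · rintro ⟨rs', h1, rfl⟩
        rw [(Pre.toTermL_vals v rs rs').1 h1]
      · rintro rfl
        exact ⟨rs, (Pre.toTermL_vals v rs rs).2 rfl, rfl⟩

theorem Pre.toTermL_vals (v : Val C) :
    ∀ (rs rs' : List (Pre C)),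
      (Term.vals opFun v (Pre.toTermL (O := O) rs) rs' ↔ rs' = rs)
  | [], rs' => by simp [Pre.toTermL, Term.vals]
  | r :: rs, rs' => by
      simp only [Pre.toTermL, Term.vals]
      constructor
      · rintro ⟨s, ss, rfl, hs, hss⟩
        rw [Pre.toTerm_val v r] at hs
        rw [hs, (Pre.toTermL_vals v rs ss).1 hss]
      · rintro rfl
        exact ⟨r, rs, rfl, by rw [Pre.toTerm_val v r]; rfl,
          (Pre.toTermL_vals v rs rs).2 rfl⟩
end

theorem Term.vals_length {v : Val C} :
    ∀ {ts : List (Term C O)} {rs : List (Pre C)}, Term.vals opFun v ts rs →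
      rs.length = ts.length
  | [], rs, h => by simp [Term.vals] at h; simp [h]
  | t :: ts, rs, h => by
      obtain ⟨r, rs', rfl, _, hrs⟩ := h
      simp [Term.vals_length hrs]

end TermLemmas

/-! ### Auxiliary: satisfaction of abbreviated connectives -/

section AFmlLemmas
variable {C O A : Type}
variable (opFun : O → List ℤ → Option ℤ)
variable (aggFun : A → Set (List (Pre C)) → Pre C)
variable (lt : Pre C → Pre C → Prop)
variable (I : Interp C)

theorem AFml.sat_negF (v : Val C) (F : AFml C O A) :
    AFml.sat opFun aggFun lt I v (AFml.negF F) ↔ ¬ AFml.sat opFun aggFun lt I v F := by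
  simp [AFml.negF, AFml.sat]

theorem AFml.sat_andF (v : Val C) (F G : AFml C O A) :
    AFml.sat opFun aggFun lt I v (AFml.andF F G) ↔
      AFml.sat opFun aggFun lt I v F ∧ AFml.sat opFun aggFun lt I v G := by
  simp only [AFml.andF, AFml.sat]
  tauto

theorem AFml.sat_orF (v : Val C) (F G : AFml C O A) :
    AFml.sat opFun aggFun lt I v (AFml.orF F G) ↔
      AFml.sat opFun aggFun lt I v F ∨ AFml.sat opFun aggFun lt I v G := by
  simp only [AFml.orF, AFml.negF, AFml.sat]
  tauto

theorem AFml.sat_iffF (v : Val C) (F G : AFml C O A) :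
    AFml.sat opFun aggFun lt I v (AFml.iffF F G) ↔
      (AFml.sat opFun aggFun lt I v F ↔ AFml.sat opFun aggFun lt I v G) := by
  simp only [AFml.iffF, AFml.sat_andF, AFml.sat]
  tauto

theorem AFml.sat_andList (v : Val C) (l : List (AFml C O A)) :
    AFml.sat opFun aggFun lt I v (AFml.andList l) ↔
      ∀ F ∈ l, AFml.sat opFun aggFun lt I v F := by
  induction l with
  | nil => simp [AFml.andList, AFml.topF, AFml.negF, AFml.sat]
  | cons F l ih =>
      simp only [AFml.andList, List.foldr_cons] at *
      rw [AFml.sat_andF, ih]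
      simp

theorem AFml.sat_orList (v : Val C) (l : List (AFml C O A)) :
    AFml.sat opFun aggFun lt I v (AFml.orList l) ↔
      ∃ F ∈ l, AFml.sat opFun aggFun lt I v F := by
  induction l with
  | nil => simp [AFml.orList, AFml.sat]
  | cons F l ih =>
      simp only [AFml.orList, List.foldr_cons] at *
      rw [AFml.sat_orF, ih]
      simp only [List.mem_cons]
      constructor
      · rintro (h | ⟨G, hG, h⟩)
        · exact ⟨F, Or.inl rfl, h⟩
        · exact ⟨G, Or.inr hG, h⟩
      · rintro ⟨G, (rfl | hG), h⟩
        · exact Or.inl h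
        · exact Or.inr ⟨G, hG, h⟩

theorem AFml.sat_exF (v : Val C) (x : ℕ) (F : AFml C O A) :
    AFml.sat opFun aggFun lt I v (AFml.exF x F) ↔
      ∃ r : Pre C, AFml.sat opFun aggFun lt I (Function.update v x r) F := by
  simp only [AFml.exF, AFml.negF, AFml.sat]
  constructor
  · intro h
    by_contra hc
    push_neg at hc
    exact h fun r hr => hc r hr
  · rintro ⟨r, hr⟩ h
    exact h r hr

theorem AFml.sat_exList (v : Val C) (xs : List ℕ) (hnd : xs.Nodup) (F : AFml C O A) :
    AFml.sat opFun aggFun lt I v (AFml.exList xs F) ↔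
      ∃ rs : List (Pre C), rs.length = xs.length ∧
        AFml.sat opFun aggFun lt I (updList v xs rs) F := by
  induction xs generalizing v with
  | nil =>
      simp only [AFml.exList, List.foldr_nil, List.length_nil, List.length_eq_zero_iff]
      constructor
      · intro h; exact ⟨[], rfl, h⟩
      · rintro ⟨rs, rfl, h⟩; exact h
  | cons x xs ih =>
      have hx : x ∉ xs := by simp at hnd; exact hnd.1
      have hnd' : xs.Nodup := by simp at hnd; exact hnd.2
      simp only [AFml.exList, List.foldr_cons] at *
      rw [AFml.sat_exF]
      constructor
      · rintro ⟨r, hr⟩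
        obtain ⟨rs, hlen, hsat⟩ := (ih _ hnd').1 hr
        refine ⟨r :: rs, by simp [hlen], ?_⟩
        rw [updList, ← updList_update_comm v xs rs x r hx]
        exact hsat
      · rintro ⟨rs, hlen, hsat⟩
        match rs, hlen with
        | r :: rs, hlen =>
          refine ⟨r, (ih _ hnd').2 ⟨rs, by simpa using hlen, ?_⟩⟩
          rw [updList_update_comm v xs rs x r hx]
          exact hsat

theorem AFml.sat_allList (v : Val C) (xs : List ℕ) (hnd : xs.Nodup) (F : AFml C O A) :
    AFml.sat opFun aggFun lt I v (AFml.allList xs F) ↔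
      ∀ rs : List (Pre C), rs.length = xs.length →
        AFml.sat opFun aggFun lt I (updList v xs rs) F := by
  induction xs generalizing v with
  | nil =>
      simp only [AFml.allList, List.foldr_nil, List.length_nil, List.length_eq_zero_iff]
      constructor
      · rintro h rs rfl; exact h
      · intro h; exact h [] rfl
  | cons x xs ih =>
      have hx : x ∉ xs := by simp at hnd; exact hnd.1
      have hnd' : xs.Nodup := by simp at hnd; exact hnd.2
      simp only [AFml.allList, List.foldr_cons] at *
      show (∀ r, AFml.sat opFun aggFun lt I (Function.update v x r) _) ↔ _
      constructor
      · intro h rs hlen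
        match rs, hlen with
        | r :: rs, hlen =>
          rw [updList, ← updList_update_comm v xs rs x r hx]
          exact (ih _ hnd').1 (h r) rs (by simpa using hlen)
      · intro h r
        refine (ih _ hnd').2 (fun rs hlen => ?_)
        rw [updList_update_comm v xs rs x r hx]
        exact h (r :: rs) (by simp [hlen])

theorem AArg.evalL_map_var (v : Val C) (ws : List ℕ) :
    AArg.evalL (O := O) (A := A) opFun aggFun lt I v (ws.map AArg.var) = ws.map v := by
  induction ws with
  | nil => rfl
  | cons w ws ih => simp [AArg.evalL, AArg.eval, ih]

theorem sat_memConj (v : Val C) :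
    ∀ (ws : List ℕ) (ts : List (Term C O)), ws.length = ts.length →
      (AFml.sat opFun aggFun lt I v (memConj (A := A) ws ts) ↔
        Term.vals opFun v ts (ws.map v)) := by
  intro ws
  induction ws with
  | nil =>
      intro ts hlen
      match ts, hlen with
      | [], _ => simp [memConj, AFml.sat_andList, Term.vals]
  | cons w ws ih =>
      intro ts hlen
      match ts, hlen with
      | t :: ts, hlen =>
        simp only [memConj, List.zip_cons_cons, List.map_cons, List.map] at *
        rw [AFml.sat_andList]
        simp only [List.mem_cons, List.mem_map]
        constructor
        · intro h
          refine ⟨v w, ws.map v, rfl, ?_, ?_⟩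
          · have := h _ (Or.inl rfl)
            simpa [AFml.sat, AArg.eval] using this
          · rw [← ih ts (by simpa using hlen)]
            rw [AFml.sat_andList]
            intro F hF
            simp only [List.mem_map] at hF
            obtain ⟨q, hq, rfl⟩ := hF
            exact h _ (Or.inr ⟨q, hq, rfl⟩)
        · rintro ⟨r, rs', heq, hr, hrs⟩
          injection heq with h1 h2
          intro F hF
          rcases hF with rfl | ⟨q, hq, rfl⟩
          · subst h1
            simpa [AFml.sat, AArg.eval] using hr
          · have := (ih ts (by simpa using hlen)).2 (by rw [← h2] at hrs; exact hrs)
            rw [AFml.sat_andList] at this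
            exact this _ (List.mem_map.2 ⟨q, hq, rfl⟩)

end AFmlLemmas

/-! ### Auxiliary: satisfaction of τ-translations -/

theorem updList_congr_mem {C : Type} (v₁ v₂ : Val C) :
    ∀ (xs : List ℕ) (rs : List (Pre C)), rs.length = xs.length →
      ∀ x ∈ xs, updList v₁ xs rs x = updList v₂ xs rs x
  | [], _, _, x, hx => by simp at hx
  | y :: ys, rs, hlen, x, hx => by
      match rs, hlen with
      | r :: rs, hlen =>
        by_cases hxy : x = y
        · subst hxy; simp [updList]
        · simp only [updList]
          rw [Function.update_of_ne hxy, Function.update_of_ne hxy]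
          exact updList_congr_mem v₁ v₂ ys rs (by simpa using hlen) x
            (by rcases List.mem_cons.1 hx with h | h; exact absurd h hxy; exact h)

section TauLemmas
variable {C O A : Type}
variable (opFun : O → List ℤ → Option ℤ)
variable (aggFun : A → Set (List (Pre C)) → Pre C)
variable (lt : Pre C → Pre C → Prop)
variable (I : Interp C)

theorem sat_tauLit (v : Val C) (l : Lit C O) :
    IForm.sat I (tauLit opFun v l) ↔
      ∃ rs, Term.vals opFun v l.args rs ∧
        (cond l.pos ((l.pred, rs) ∈ I) ((l.pred, rs) ∉ I)) := by
  cases hpos : l.pos <;> simp only [tauLit, hpos, if_true, if_false, cond] <;>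
    constructor
  · rintro ⟨⟨rs, hrs⟩, h⟩
    exact ⟨rs, hrs, h⟩
  · rintro ⟨rs, hrs, h⟩
    exact ⟨⟨rs, hrs⟩, h⟩
  · rintro ⟨⟨rs, hrs⟩, h⟩
    exact ⟨rs, hrs, h⟩
  · rintro ⟨rs, hrs, h⟩
    exact ⟨⟨rs, hrs⟩, h⟩

theorem sat_tauComp (v : Val C) (c : Comp C O) :
    IForm.sat I (tauComp opFun lt v c) ↔
      ∃ r₁ ∈ Term.val opFun v c.lhs, ∃ r₂ ∈ Term.val opFun v c.rhs,
        Rel.eval lt c.rel r₁ r₂ := by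
  by_cases h : ∃ r₁ ∈ Term.val opFun v c.lhs, ∃ r₂ ∈ Term.val opFun v c.rhs,
      Rel.eval lt c.rel r₁ r₂
  · simp [tauComp, if_pos h, h]
  · simp only [tauComp, if_neg h]
    exact iff_of_false (fun hx => hx) h

theorem sat_tauCond (v : Val C) (cond : List (CondElem C O)) :
    IForm.sat I (tauCond opFun lt v cond) ↔
      ∀ ce ∈ cond, IForm.sat I (tauCondElem opFun lt v ce) := by
  rw [tauCond, IForm.sat_conjList]
  constructor
  · intro h ce hce
    exact h _ (List.mem_map.2 ⟨ce, hce, rfl⟩)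
  · rintro h F hF
    obtain ⟨ce, hce, rfl⟩ := List.mem_map.1 hF
    exact h ce hce

theorem sat_tauAgg (v : Val C) (xs : List ℕ) (E : AggExpr C O A) :
    IForm.sat I (tauAgg opFun aggFun lt v xs E) ↔
      Justifies opFun aggFun lt v xs E
        {rs : AggTuple C xs | IForm.sat I (tauCond opFun lt (updList v xs rs.val) E.cond)} := by
  set ΔI : Set (AggTuple C xs) :=
    {rs | IForm.sat I (tauCond opFun lt (updList v xs rs.val) E.cond)} with hΔI
  constructor
  · intro h
    by_contra hnj
    have h2 := h ⟨ΔI, hnj⟩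
    have : ∃ i : {rs : AggTuple C xs // rs ∉ ΔI},
        IForm.sat I (tauCond opFun lt (updList v xs i.val.val) E.cond) :=
      h2 (fun i => i.property)
    obtain ⟨i, hi⟩ := this
    exact i.property hi
  · intro hj Δ hant
    have hsub : Δ.val ⊆ ΔI := fun rs hrs => hant ⟨rs, hrs⟩
    have hne : Δ.val ≠ ΔI := fun he => Δ.property (he ▸ hj)
    obtain ⟨rs, hrs, hnrs⟩ := Set.exists_of_ssubset (hsub.ssubset_of_ne hne)
    exact ⟨⟨rs, hnrs⟩, hrs⟩

/-! Invariance of τ-translations under valuations agreeing on the variables. -/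

theorem tauLit_congr {v₁ v₂ : Val C} (l : Lit C O)
    (h : ∀ x ∈ l.varList, v₁ x = v₂ x) :
    IForm.sat I (tauLit opFun v₁ l) ↔ IForm.sat I (tauLit opFun v₂ l) := by
  rw [sat_tauLit, sat_tauLit]
  exact exists_congr fun rs => and_congr_left' (Term.vals_congr opFun v₁ v₂ l.args rs h)

theorem tauComp_congr {v₁ v₂ : Val C} (c : Comp C O)
    (h : ∀ x ∈ c.varList, v₁ x = v₂ x) :
    IForm.sat I (tauComp opFun lt v₁ c) ↔ IForm.sat I (tauComp opFun lt v₂ c) := by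
  rw [sat_tauComp, sat_tauComp]
  rw [Term.val_congr opFun v₁ v₂ c.lhs (fun x hx => h x (by simp [Comp.varList]; exact Or.inl hx)),
    Term.val_congr opFun v₁ v₂ c.rhs (fun x hx => h x (by simp [Comp.varList]; exact Or.inr hx))]

theorem tauCondElem_congr {v₁ v₂ : Val C} (ce : CondElem C O)
    (h : ∀ x ∈ ce.varList, v₁ x = v₂ x) :
    IForm.sat I (tauCondElem opFun lt v₁ ce) ↔ IForm.sat I (tauCondElem opFun lt v₂ ce) := by
  cases ce with
  | inl l => exact tauLit_congr opFun I l h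
  | inr c => exact tauComp_congr opFun lt I c h

theorem tauCond_congr {v₁ v₂ : Val C} (cond : List (CondElem C O))
    (h : ∀ ce ∈ cond, ∀ x ∈ CondElem.varList ce, v₁ x = v₂ x) :
    IForm.sat I (tauCond opFun lt v₁ cond) ↔ IForm.sat I (tauCond opFun lt v₂ cond) := by
  rw [sat_tauCond, sat_tauCond]
  exact forall_congr' fun ce => forall_congr' fun hce =>
    ⟨fun hs => (tauCondElem_congr opFun lt I ce (h ce hce)).1 hs,
     fun hs => (tauCondElem_congr opFun lt I ce (h ce hce)).2 hs⟩

theorem mem_lhsVarList_of_cond {E : AggExpr C O A} {ce : CondElem C O}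
    (hce : ce ∈ E.cond) {x : ℕ} (hx : x ∈ CondElem.varList ce) : x ∈ E.varList := by
  simp only [AggExpr.varList, AggExpr.lhsVarList, List.mem_append]
  exact Or.inl (Or.inr (List.mem_flatMap.2 ⟨ce, hce, hx⟩))

theorem mem_lhsVarList_of_ts {E : AggExpr C O A} {x : ℕ}
    (hx : x ∈ Term.varListL E.ts) : x ∈ E.varList := by
  simp only [AggExpr.varList, AggExpr.lhsVarList, List.mem_append]
  exact Or.inl (Or.inl hx)

theorem tauAgg_congr {v₁ v₂ : Val C} (xs : List ℕ) (E : AggExpr C O A)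
    (h1 : ∀ x ∈ E.varList, x ∉ xs → v₁ x = v₂ x)
    (h2 : ∀ x ∈ boundVarList E.bound, v₁ x = v₂ x) :
    IForm.sat I (tauAgg opFun aggFun lt v₁ xs E) ↔
      IForm.sat I (tauAgg opFun aggFun lt v₂ xs E) := by
  have hupd : ∀ (rs : AggTuple C xs), ∀ x ∈ E.varList,
      updList v₁ xs rs.val x = updList v₂ xs rs.val x := by
    intro rs x hx
    by_cases hmem : x ∈ xs
    · exact updList_congr_mem v₁ v₂ xs rs.val rs.property x hmem
    · rw [updList_eq_of_not_mem v₁ xs rs.val x hmem,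
        updList_eq_of_not_mem v₂ xs rs.val x hmem]
      exact h1 x hx hmem
  have hcond : ∀ (rs : AggTuple C xs),
      IForm.sat I (tauCond opFun lt (updList v₁ xs rs.val) E.cond) ↔
        IForm.sat I (tauCond opFun lt (updList v₂ xs rs.val) E.cond) := by
    intro rs
    exact tauCond_congr opFun lt I E.cond fun ce hce x hx =>
      hupd rs x (mem_lhsVarList_of_cond hce hx)
  have hjust : ∀ Δ : Set (AggTuple C xs),
      (Justifies opFun aggFun lt v₁ xs E Δ ↔ Justifies opFun aggFun lt v₂ xs E Δ) := by
    intro Δ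
    unfold Justifies
    have hset : {q | ∃ rs ∈ Δ, Term.vals opFun (updList v₁ xs rs.val) E.ts q} =
        {q | ∃ rs ∈ Δ, Term.vals opFun (updList v₂ xs rs.val) E.ts q} := by
      ext q
      exact exists_congr fun rs => and_congr_right fun hrs =>
        Term.vals_congr opFun _ _ E.ts q fun x hx => hupd rs x (mem_lhsVarList_of_ts hx)
    have hbv : boundVal v₁ E.bound = boundVal v₂ E.bound := by
      cases hb : E.bound with
      | inl x => simpa [boundVal] using h2 x (by simp [hb, boundVarList])
      | inr r => simp [boundVal]
    rw [hset, hbv]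
  rw [sat_tauAgg, sat_tauAgg]
  have hΔeq : {rs : AggTuple C xs |
        IForm.sat I (tauCond opFun lt (updList v₁ xs rs.val) E.cond)} =
      {rs : AggTuple C xs |
        IForm.sat I (tauCond opFun lt (updList v₂ xs rs.val) E.cond)} := by
    ext rs; exact hcond rs
  rw [hΔeq]
  exact hjust _

theorem tauBElem_congr {v₁ v₂ : Val C} (loc : List ℕ) (e : BElem C O A)
    (h : ∀ x ∈ e.varList,
      x ∉ (match e with
           | .agg E => E.varList.dedup.filter (· ∈ loc)
           | _ => ([] : List ℕ)) → v₁ x = v₂ x)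
    (hb : ∀ E, e = .agg E → ∀ x ∈ boundVarList E.bound, x ∉ loc) :
    IForm.sat I (tauBElem opFun aggFun lt v₁ loc e) ↔
      IForm.sat I (tauBElem opFun aggFun lt v₂ loc e) := by
  cases e with
  | lit l =>
      exact tauLit_congr opFun I l fun x hx => h x hx (by simp)
  | comp c =>
      exact tauComp_congr opFun lt I c fun x hx => h x hx (by simp)
  | agg E =>
      have hbnd : ∀ x ∈ boundVarList E.bound, x ∉ E.varList.dedup.filter (· ∈ loc) := by
        intro x hx hmem
        exact (hb E rfl x hx) (by simpa using (List.mem_filter.1 hmem).2)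
      refine tauAgg_congr opFun aggFun lt I _ E ?_ ?_
      · intro x hx hnx
        exact h x (by simp [BElem.varList, AggExpr.varList] at hx ⊢; tauto) hnx
      · intro x hx
        refine h x ?_ (hbnd x hx)
        simp [BElem.varList, AggExpr.varList, boundVarList] at hx ⊢
        cases hB : E.bound with
        | inl y => right; simp [hB, boundVarList] at hx; simp [hx, hB, boundVarList]
        | inr r => simp [hB, boundVarList] at hx

end TauLemmas

/-! ### Auxiliary: φ–τ correspondence -/

theorem nodup_range_map_add (k n : ℕ) : (((List.range k).map (· + n)).Nodup) :=
  (List.nodup_range (n := k)).map (add_left_injective n)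

theorem mem_range_map_add {k n w : ℕ} :
    w ∈ (List.range k).map (· + n) ↔ ∃ i < k, w = i + n := by
  simp [List.mem_map, List.mem_range, eq_comm]

theorem le_of_mem_range_map_add {k n w : ℕ} (h : w ∈ (List.range k).map (· + n)) :
    n ≤ w := by
  obtain ⟨i, _, rfl⟩ := mem_range_map_add.1 h
  omega

section PhiTau
variable {C O A : Type}
variable (opFun : O → List ℤ → Option ℤ)
variable (aggFun : A → Set (List (Pre C)) → Pre C)
variable (lt : Pre C → Pre C → Prop)
variable (I : Interp C)

theorem map_updList_self {v : Val C} :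
    ∀ {xs : List ℕ} {rs : List (Pre C)}, xs.Nodup → rs.length = xs.length →
      xs.map (updList v xs rs) = rs := by
  intro xs
  induction xs with
  | nil => intro rs _ h; simp at h; simp [h]
  | cons y ys ih =>
      intro rs hnd hlen
      match rs, hlen with
      | r :: rs, hlen =>
        have hy : y ∉ ys := by simp at hnd; exact hnd.1
        simp only [updList, List.map_cons, Function.update_self]
        congr 1
        have heq : List.map (Function.update (updList v ys rs) y r) ys =
            List.map (updList v ys rs) ys :=
          List.map_congr_left (fun x hx =>
            Function.update_of_ne (fun he => hy (by rw [← he]; exact hx)) _ _)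
        rw [heq]
        exact ih (by simp at hnd; exact hnd.2) (by simpa using hlen)

theorem sat_phiLit (v : Val C) (l : Lit C O) :
    AFml.sat opFun aggFun lt I v (phiLit l) ↔ IForm.sat I (tauLit opFun v l) := by
  rw [sat_tauLit]
  set n := freshVar l.varList with hn
  set ws := (List.range l.args.length).map (· + n) with hws
  have hndws : ws.Nodup := nodup_range_map_add _ _
  have hlenws : ws.length = l.args.length := by simp [hws]
  have hfresh : ∀ w ∈ ws, w ∉ l.varList := fun w hw hmem =>
    absurd (lt_freshVar hmem) (by have := le_of_mem_range_map_add (hws ▸ hw); omega)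
  rw [phiLit]
  simp only [← hn, ← hws]
  rw [AFml.sat_exList _ _ _ _ _ _ hndws]
  constructor
  · rintro ⟨rs, hlen, hsat⟩
    rw [AFml.sat_andF] at hsat
    obtain ⟨hmem, hatom⟩ := hsat
    set u' := updList v ws rs with hu'
    have hmems : Term.vals opFun u' l.args (ws.map u') :=
      (sat_memConj opFun aggFun lt I u' ws l.args (by rw [hlenws])).1 hmem
    have hmap : ws.map u' = rs := map_updList_self hndws (by rw [hlen])
    have hvals : Term.vals opFun v l.args rs := by
      rw [hmap] at hmems
      exact (Term.vals_congr opFun u' v l.args rs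
        (fun x hx => updList_eq_of_not_mem v ws rs x
          (fun hxw => hfresh x hxw hx))).1 hmems
    refine ⟨rs, hvals, ?_⟩
    cases hpos : l.pos <;> simp only [hpos, Bool.false_eq_true, if_false, if_true] at hatom <;>
      simp only [cond]
    · rw [AFml.sat_negF] at hatom
      show (l.pred, rs) ∉ I
      rw [show AFml.sat opFun aggFun lt I u' (AFml.atom l.pred (ws.map AArg.var)) =
        ((l.pred, AArg.evalL opFun aggFun lt I u' (ws.map AArg.var)) ∈ I) from rfl,
        AArg.evalL_map_var, hmap] at hatom
      exact hatom
    · show (l.pred, rs) ∈ I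
      rw [show AFml.sat opFun aggFun lt I u' (AFml.atom l.pred (ws.map AArg.var)) =
        ((l.pred, AArg.evalL opFun aggFun lt I u' (ws.map AArg.var)) ∈ I) from rfl,
        AArg.evalL_map_var, hmap] at hatom
      exact hatom
  · rintro ⟨rs, hvals, hcond⟩
    have hlenrs : rs.length = ws.length := by
      rw [Term.vals_length opFun hvals, hlenws]
    refine ⟨rs, hlenrs, ?_⟩
    set u' := updList v ws rs with hu'
    have hmap : ws.map u' = rs := map_updList_self hndws hlenrs
    have hvals' : Term.vals opFun u' l.args (ws.map u') := by
      rw [hmap]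
      exact (Term.vals_congr opFun v u' l.args rs
        (fun x hx => (updList_eq_of_not_mem v ws rs x
          (fun hxw => hfresh x hxw hx)).symm)).1 hvals
    rw [AFml.sat_andF]
    refine ⟨(sat_memConj opFun aggFun lt I u' ws l.args (by rw [hlenws])).2 hvals', ?_⟩
    cases hpos : l.pos <;> rw [hpos] at hcond <;> simp only [cond] at hcond <;>
      simp only [hpos, Bool.false_eq_true, if_false, if_true]
    · rw [AFml.sat_negF]
      rw [show AFml.sat opFun aggFun lt I u' (AFml.atom l.pred (ws.map AArg.var)) =
        ((l.pred, AArg.evalL opFun aggFun lt I u' (ws.map AArg.var)) ∈ I) from rfl,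
        AArg.evalL_map_var, hmap]
      exact hcond
    · rw [show AFml.sat opFun aggFun lt I u' (AFml.atom l.pred (ws.map AArg.var)) =
        ((l.pred, AArg.evalL opFun aggFun lt I u' (ws.map AArg.var)) ∈ I) from rfl,
        AArg.evalL_map_var, hmap]
      exact hcond

theorem sat_phiComp (v : Val C) (c : Comp C O) :
    AFml.sat opFun aggFun lt I v (phiComp c) ↔ IForm.sat I (tauComp opFun lt v c) := by
  rw [sat_tauComp]
  set n := freshVar c.varList with hn
  have hl : ∀ x ∈ c.lhs.varList, x < n := fun x hx =>
    lt_freshVar (by simp [Comp.varList]; exact Or.inl hx)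
  have hr : ∀ x ∈ c.rhs.varList, x < n := fun x hx =>
    lt_freshVar (by simp [Comp.varList]; exact Or.inr hx)
  rw [phiComp]
  simp only [← hn]
  rw [AFml.sat_exF]
  constructor
  · rintro ⟨r₁, hsat⟩
    rw [AFml.sat_exF] at hsat
    obtain ⟨r₂, hsat⟩ := hsat
    rw [AFml.sat_andF, AFml.sat_andF] at hsat
    obtain ⟨h1, h2, h3⟩ := hsat
    set u' := Function.update (Function.update v n r₁) (n + 1) r₂ with hu'
    have hval1 : Term.val opFun u' c.lhs = Term.val opFun v c.lhs :=
      Term.val_congr opFun u' v c.lhs (fun x hx => by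
        have := hl x hx
        rw [hu', Function.update_of_ne (by omega), Function.update_of_ne (by omega)])
    have hval2 : Term.val opFun u' c.rhs = Term.val opFun v c.rhs :=
      Term.val_congr opFun u' v c.rhs (fun x hx => by
        have := hr x hx
        rw [hu', Function.update_of_ne (by omega), Function.update_of_ne (by omega)])
    have hen : AArg.eval opFun aggFun lt I u' (AArg.var n) = r₁ := by
      show u' n = r₁
      rw [hu', Function.update_of_ne (by omega), Function.update_self]
    have hen1 : AArg.eval opFun aggFun lt I u' (AArg.var (n + 1)) = r₂ := by
      show u' (n + 1) = r₂
      rw [hu', Function.update_self]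
    refine ⟨r₁, ?_, r₂, ?_, ?_⟩
    · have : AArg.eval opFun aggFun lt I u' (AArg.var n) ∈ Term.val opFun u' c.lhs := h1
      rwa [hen, hval1] at this
    · have : AArg.eval opFun aggFun lt I u' (AArg.var (n+1)) ∈ Term.val opFun u' c.rhs := h2
      rwa [hen1, hval2] at this
    · have : Rel.eval lt c.rel (AArg.eval opFun aggFun lt I u' (AArg.var n))
        (AArg.eval opFun aggFun lt I u' (AArg.var (n+1))) := h3
      rwa [hen, hen1] at this
  · rintro ⟨r₁, hr₁, r₂, hr₂, hrel⟩
    refine ⟨r₁, ?_⟩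
    rw [AFml.sat_exF]
    refine ⟨r₂, ?_⟩
    set u' := Function.update (Function.update v n r₁) (n + 1) r₂ with hu'
    have hval1 : Term.val opFun u' c.lhs = Term.val opFun v c.lhs :=
      Term.val_congr opFun u' v c.lhs (fun x hx => by
        have := hl x hx
        rw [hu', Function.update_of_ne (by omega), Function.update_of_ne (by omega)])
    have hval2 : Term.val opFun u' c.rhs = Term.val opFun v c.rhs :=
      Term.val_congr opFun u' v c.rhs (fun x hx => by
        have := hr x hx
        rw [hu', Function.update_of_ne (by omega), Function.update_of_ne (by omega)])
    have hen : u' n = r₁ := by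
      rw [hu', Function.update_of_ne (by omega), Function.update_self]
    have hen1 : u' (n + 1) = r₂ := by
      rw [hu', Function.update_self]
    rw [AFml.sat_andF, AFml.sat_andF]
    refine ⟨?_, ?_, ?_⟩
    · show u' n ∈ Term.val opFun u' c.lhs
      rw [hen, hval1]; exact hr₁
    · show u' (n + 1) ∈ Term.val opFun u' c.rhs
      rw [hen1, hval2]; exact hr₂
    · show Rel.eval lt c.rel (u' n) (u' (n + 1))
      rw [hen, hen1]; exact hrel

theorem sat_phiCondElem (v : Val C) (ce : CondElem C O) :
    AFml.sat opFun aggFun lt I v (phiCondElem ce) ↔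
      IForm.sat I (tauCondElem opFun lt v ce) := by
  cases ce with
  | inl l => exact sat_phiLit opFun aggFun lt I v l
  | inr c => exact sat_phiComp opFun aggFun lt I v c

theorem sat_phiCond (v : Val C) (cond : List (CondElem C O)) :
    AFml.sat opFun aggFun lt I v (phiCond cond) ↔
      IForm.sat I (tauCond opFun lt v cond) := by
  rw [sat_tauCond, phiCond, AFml.sat_andList]
  constructor
  · intro h ce hce
    exact (sat_phiCondElem opFun aggFun lt I v ce).1 (h _ (List.mem_map.2 ⟨ce, hce, rfl⟩))
  · intro h F hF
    obtain ⟨ce, hce, rfl⟩ := List.mem_map.1 hF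
    exact (sat_phiCondElem opFun aggFun lt I v ce).2 (h ce hce)

end PhiTau

section PhiTauAgg
variable {C O A : Type}
variable (opFun : O → List ℤ → Option ℤ)
variable (aggFun : A → Set (List (Pre C)) → Pre C)
variable (lt : Pre C → Pre C → Prop)
variable (I : Interp C)

theorem sat_phiAgg (v : Val C) (xs : List ℕ) (hnd : xs.Nodup) (E : AggExpr C O A) :
    AFml.sat opFun aggFun lt I v (phiAgg xs E) ↔
      IForm.sat I (tauAgg opFun aggFun lt v (E.varList.dedup.filter (· ∈ xs)) E) := by
  classical
  set xsτ := E.varList.dedup.filter (· ∈ xs) with hxsτ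
  have hndτ : xsτ.Nodup := E.varList.nodup_dedup.filter _
  have hsubxs : ∀ x ∈ xsτ, x ∈ xs := fun x hx => by
    have := (List.mem_filter.1 (hxsτ ▸ hx)).2; simpa using this
  have hsubE : ∀ x ∈ xsτ, x ∈ E.varList := fun x hx =>
    List.mem_dedup.1 (List.mem_filter.1 (hxsτ ▸ hx)).1
  have hmemτ : ∀ x ∈ E.varList, (x ∈ xsτ ↔ x ∈ xs) := by
    intro x hx
    rw [hxsτ, List.mem_filter, List.mem_dedup]
    simp [hx]
  set n := freshVar (xs ++ E.varList) with hn
  have hxslt : ∀ x ∈ xs, x < n := fun x hx => lt_freshVar (by simp [hx])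
  have hElt : ∀ x ∈ E.varList, x < n := fun x hx => lt_freshVar (by simp [hx])
  set zs := (List.range E.ts.length).map (· + (n + 1)) with hzs
  have hndzs : zs.Nodup := nodup_range_map_add _ _
  have hlenzs : zs.length = E.ts.length := by simp [hzs]
  have hzge : ∀ z ∈ zs, n + 1 ≤ z := fun z hz => le_of_mem_range_map_add (hzs ▸ hz)
  have hznxs : ∀ z ∈ zs, z ∉ xs := fun z hz hmem => by
    have := hxslt z hmem; have := hzge z hz; omega
  have hznE : ∀ z ∈ zs, z ∉ E.varList := fun z hz hmem => by
    have := hElt z hmem; have := hzge z hz; omega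
  set ΔI : Set (AggTuple C xsτ) :=
    {rs | IForm.sat I (tauCond opFun lt (updList v xsτ rs.val) E.cond)} with hΔI
  set Sτ : Set (List (Pre C)) :=
    {q | ∃ rs ∈ ΔI, Term.vals opFun (updList v xsτ rs.val) E.ts q} with hSτ
  set inner : AFml C O A := AFml.exList xs (AFml.andF
      (AFml.andList ((zs.zip E.ts).map (fun q => AFml.mem (AArg.var q.1) q.2)))
      (phiCond E.cond)) with hinner
  -- the key set identity
  have hkey : ∀ r : Pre C,
      {rs : List (Pre C) | rs.length = zs.length ∧
        AFml.sat opFun aggFun lt I (updList (Function.update v n r) zs rs) inner} = Sτ := by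
    intro r
    set u₁ := Function.update v n r with hu₁
    have hu₁eq : ∀ x, x ≠ n → u₁ x = v x := fun x hx => Function.update_of_ne hx _ _
    ext q
    simp only [Set.mem_setOf_eq]
    constructor
    · rintro ⟨hlenq, hsat⟩
      set w₀ := updList u₁ zs q with hw₀
      rw [hinner, AFml.sat_exList _ _ _ _ _ _ hnd] at hsat
      obtain ⟨ss, hlenss, hsat⟩ := hsat
      set w₁ := updList w₀ xs ss with hw₁
      rw [AFml.sat_andF] at hsat
      obtain ⟨hmems, hcond⟩ := hsat
      have hvals : Term.vals opFun w₁ E.ts (zs.map w₁) :=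
        (sat_memConj opFun aggFun lt I w₁ zs E.ts hlenzs).1 hmems
      have hzmap : zs.map w₁ = q := by
        have h1 : zs.map w₁ = zs.map w₀ :=
          List.map_congr_left fun z hz =>
            updList_eq_of_not_mem w₀ xs ss z (hznxs z hz)
        rw [h1, hw₀]
        exact map_updList_self hndzs hlenq
      rw [hzmap] at hvals
      -- transfer to the valuation updList v xsτ rs'
      set rs' : List (Pre C) := xsτ.map w₁ with hrs'
      have hlenrs' : rs'.length = xsτ.length := by simp [hrs']
      have hA : ∀ x ∈ E.varList, w₁ x = updList v xsτ rs' x := by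
        intro x hx
        rw [hrs', updList_map v xsτ w₁ hndτ x]
        by_cases hxτ : x ∈ xsτ
        · rw [if_pos hxτ]
        · rw [if_neg hxτ]
          have hxxs : x ∉ xs := fun hxx => hxτ ((hmemτ x hx).2 hxx)
          rw [hw₁, updList_eq_of_not_mem w₀ xs ss x hxxs, hw₀,
            updList_eq_of_not_mem u₁ zs q x (fun hz => hznE x hz hx)]
          exact hu₁eq x (by have := hElt x hx; omega)
      refine ⟨⟨rs', hlenrs'⟩, ?_, ?_⟩
      · show IForm.sat I (tauCond opFun lt (updList v xsτ rs') E.cond)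
        rw [← tauCond_congr opFun lt I E.cond
          (fun ce hce x hx => hA x (mem_lhsVarList_of_cond hce hx))]
        exact (sat_phiCond opFun aggFun lt I w₁ E.cond).1 hcond
      · show Term.vals opFun (updList v xsτ rs') E.ts q
        exact (Term.vals_congr opFun w₁ _ E.ts q
          (fun x hx => hA x (mem_lhsVarList_of_ts hx))).1 hvals
    · rintro ⟨rs'', hΔ, hvals⟩
      have hlenq : q.length = zs.length := by
        rw [Term.vals_length opFun hvals, hlenzs]
      refine ⟨hlenq, ?_⟩
      set g := updList v xsτ rs''.val with hg
      set w₀ := updList u₁ zs q with hw₀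
      rw [hinner, AFml.sat_exList _ _ _ _ _ _ hnd]
      refine ⟨xs.map g, by simp, ?_⟩
      set w₁ := updList w₀ xs (xs.map g) with hw₁
      have hB : ∀ x ∈ E.varList, w₁ x = g x := by
        intro x hx
        rw [hw₁, updList_map w₀ xs g hnd x]
        by_cases hxxs : x ∈ xs
        · rw [if_pos hxxs]
        · rw [if_neg hxxs]
          have hxτ : x ∉ xsτ := fun hxx => hxxs (hsubxs x hxx)
          rw [hw₀, updList_eq_of_not_mem u₁ zs q x (fun hz => hznE x hz hx),
            hg, updList_eq_of_not_mem v xsτ rs''.val x hxτ]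
          exact hu₁eq x (by have := hElt x hx; omega)
      rw [AFml.sat_andF]
      constructor
      · refine (sat_memConj opFun aggFun lt I w₁ zs E.ts hlenzs).2 ?_
        have hzmap : zs.map w₁ = q := by
          have h1 : zs.map w₁ = zs.map w₀ :=
            List.map_congr_left fun z hz =>
              updList_eq_of_not_mem w₀ xs (xs.map g) z (hznxs z hz)
          rw [h1, hw₀]
          exact map_updList_self hndzs hlenq
        rw [hzmap]
        exact (Term.vals_congr opFun g w₁ E.ts q
          (fun x hx => (hB x (mem_lhsVarList_of_ts hx)).symm)).1 hvals
      · refine (sat_phiCond opFun aggFun lt I w₁ E.cond).2 ?_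
        rw [tauCond_congr opFun lt I E.cond
          (fun ce hce x hx => hB x (mem_lhsVarList_of_cond hce hx))]
        exact hΔ
  -- now the top level
  rw [phiAgg]
  simp only [← hn, ← hzs]
  rw [AFml.sat_exF]
  have hbt : ∀ r : Pre C, Term.val opFun (Function.update v n r) (boundTerm E.bound) =
      {boundVal v E.bound} := by
    intro r
    cases hb : E.bound with
    | inl x =>
        have hxE : x ∈ E.varList := by
          simp [AggExpr.varList, hb, boundVarList]
        simp only [boundTerm, Term.val, boundVal]
        rw [Function.update_of_ne (by have := hElt x hxE; omega)]
    | inr p =>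
        simp only [boundTerm, boundVal]
        exact Pre.toTerm_val opFun _ p
  constructor
  · rintro ⟨r, hsat⟩
    rw [AFml.sat_andF] at hsat
    obtain ⟨hrel, hmem⟩ := hsat
    have hrb : r = boundVal v E.bound := by
      have : Function.update v n r n ∈ ({boundVal v E.bound} : Set (Pre C)) := by
        rw [← hbt r]; exact hmem
      simpa using this
    rw [sat_tauAgg]
    show Rel.eval lt E.rel (aggFun E.name Sτ) (boundVal v E.bound)
    rw [← hrb]
    have heval : AArg.eval opFun aggFun lt I (Function.update v n r)
        (AArg.agg E.name zs inner) = aggFun E.name Sτ := by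
      show aggFun E.name _ = aggFun E.name Sτ
      rw [hkey r]
    have h2 : Rel.eval lt E.rel (AArg.eval opFun aggFun lt I (Function.update v n r)
        (AArg.agg E.name zs inner))
        (AArg.eval opFun aggFun lt I (Function.update v n r) (AArg.var n)) := hrel
    rw [heval] at h2
    have h3 : AArg.eval opFun aggFun lt I (Function.update v n r) (AArg.var n) = r := by
      show Function.update v n r n = r
      rw [Function.update_self]
    rw [h3] at h2
    exact h2
  · intro hsat
    rw [sat_tauAgg] at hsat
    have hsat' : Rel.eval lt E.rel (aggFun E.name Sτ) (boundVal v E.bound) := hsat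
    refine ⟨boundVal v E.bound, ?_⟩
    rw [AFml.sat_andF]
    constructor
    · show Rel.eval lt E.rel
        (AArg.eval opFun aggFun lt I _ (AArg.agg E.name zs inner))
        (AArg.eval opFun aggFun lt I _ (AArg.var n))
      have h1 : AArg.eval opFun aggFun lt I
          (Function.update v n (boundVal v E.bound)) (AArg.agg E.name zs inner) =
          aggFun E.name Sτ := by
        show aggFun E.name _ = aggFun E.name Sτ
        rw [hkey (boundVal v E.bound)]
      rw [h1]
      have h3 : AArg.eval opFun aggFun lt I (Function.update v n (boundVal v E.bound))
          (AArg.var n) = boundVal v E.bound := by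
        show Function.update v n (boundVal v E.bound) n = _
        rw [Function.update_self]
      rw [h3]
      exact hsat'
    · show AArg.eval opFun aggFun lt I _ (AArg.var n) ∈
        Term.val opFun (Function.update v n (boundVal v E.bound)) (boundTerm E.bound)
      rw [hbt]
      show Function.update v n (boundVal v E.bound) n ∈ _
      rw [Function.update_self]
      rfl

theorem sat_phiBody (v : Val C) (xs : List ℕ) (hnd : xs.Nodup) (b : List (BElem C O A)) :
    AFml.sat opFun aggFun lt I v (phiBody xs b) ↔
      IForm.sat I (tauBody opFun aggFun lt v xs b) := by
  rw [phiBody, AFml.sat_andList, tauBody, IForm.sat_conjList]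
  constructor
  · intro h F hF
    obtain ⟨e, he, rfl⟩ := List.mem_map.1 hF
    have := h _ (List.mem_map.2 ⟨e, he, rfl⟩)
    cases e with
    | lit l => exact (sat_phiLit opFun aggFun lt I v l).1 this
    | comp c => exact (sat_phiComp opFun aggFun lt I v c).1 this
    | agg E => exact (sat_phiAgg opFun aggFun lt I v xs hnd E).1 this
  · intro h F hF
    obtain ⟨e, he, rfl⟩ := List.mem_map.1 hF
    have := h _ (List.mem_map.2 ⟨e, he, rfl⟩)
    cases e with
    | lit l => exact (sat_phiLit opFun aggFun lt I v l).2 this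
    | comp c => exact (sat_phiComp opFun aggFun lt I v c).2 this
    | agg E => exact (sat_phiAgg opFun aggFun lt I v xs hnd E).2 this

end PhiTauAgg

/-! ### Auxiliary: atoms occurring in τ-translations -/

section TauAtoms
variable {C O A : Type}
variable (opFun : O → List ℤ → Option ℤ)
variable (aggFun : A → Set (List (Pre C)) → Pre C)
variable (lt : Pre C → Pre C → Prop)

theorem atomsOf_tauLit {v : Val C} {l : Lit C O} {b : EGAtom C}
    (hb : b ∈ IForm.atomsOf (tauLit opFun v l)) :
    b.1 = l.pred ∧ b.2.length = l.args.length := by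
  cases hpos : l.pos <;> rw [tauLit, hpos] at hb <;>
    simp only [Bool.false_eq_true, if_false, if_true, IForm.atomsOf, IForm.neg,
      Set.mem_iUnion] at hb
  · obtain ⟨⟨rs, hrs⟩, hmem⟩ := hb
    simp only [IForm.atomsOf, Set.union_empty, Set.mem_union, Set.mem_singleton_iff,
      Set.mem_empty_iff_false, or_false] at hmem
    subst hmem
    exact ⟨rfl, Term.vals_length opFun hrs⟩
  · obtain ⟨⟨rs, hrs⟩, hmem⟩ := hb
    simp only [IForm.atomsOf, Set.mem_singleton_iff] at hmem
    subst hmem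
    exact ⟨rfl, Term.vals_length opFun hrs⟩

theorem atomsOf_tauComp {v : Val C} {c : Comp C O} {b : EGAtom C}
    (hb : b ∈ IForm.atomsOf (tauComp opFun lt v c)) : False := by
  rw [tauComp] at hb
  split_ifs at hb
  · simp only [IForm.top, IForm.atomsOf, Set.mem_iUnion] at hb
    obtain ⟨i, _⟩ := hb
    exact i.elim
  · simp [IForm.atomsOf] at hb

theorem atomsOf_tauCondElem {v : Val C} {ce : CondElem C O} {b : EGAtom C}
    (hb : b ∈ IForm.atomsOf (tauCondElem opFun lt v ce)) :
    CondElem.hasPred b.1 b.2.length ce := by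
  cases ce with
  | inl l =>
      obtain ⟨h1, h2⟩ := atomsOf_tauLit opFun hb
      exact ⟨h1.symm, h2.symm⟩
  | inr c => exact (atomsOf_tauComp opFun lt hb).elim

theorem atomsOf_tauCond {v : Val C} {cond : List (CondElem C O)} {b : EGAtom C}
    (hb : b ∈ IForm.atomsOf (tauCond opFun lt v cond)) :
    ∃ ce ∈ cond, CondElem.hasPred b.1 b.2.length ce := by
  rw [tauCond, IForm.atomsOf_conjList] at hb
  simp only [Set.mem_iUnion] at hb
  obtain ⟨F, hF, hbF⟩ := hb
  obtain ⟨ce, hce, rfl⟩ := List.mem_map.1 hF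
  exact ⟨ce, hce, atomsOf_tauCondElem opFun lt hbF⟩

theorem atomsOf_tauAgg {v : Val C} {xs : List ℕ} {E : AggExpr C O A} {b : EGAtom C}
    (hb : b ∈ IForm.atomsOf (tauAgg opFun aggFun lt v xs E)) :
    AggExpr.hasPred b.1 b.2.length E := by
  rw [tauAgg] at hb
  have hb2 : b ∈ ⋃ (Δ : {Δ : Set (AggTuple C xs) // ¬ Justifies opFun aggFun lt v xs E Δ}),
      IForm.atomsOf (IForm.impl
        (.conj {rs : AggTuple C xs // rs ∈ Δ.val}
          (fun rs => tauCond opFun lt (updList v xs rs.val.val) E.cond))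
        (.disj {rs : AggTuple C xs // rs ∉ Δ.val}
          (fun rs => tauCond opFun lt (updList v xs rs.val.val) E.cond))) := hb
  obtain ⟨_, ⟨Δ, rfl⟩, hΔ⟩ := hb2
  have hb3 : b ∈ (⋃ (rs : {rs : AggTuple C xs // rs ∈ Δ.val}),
        IForm.atomsOf (tauCond opFun lt (updList v xs rs.val.val) E.cond)) ∪
      (⋃ (rs : {rs : AggTuple C xs // rs ∉ Δ.val}),
        IForm.atomsOf (tauCond opFun lt (updList v xs rs.val.val) E.cond)) := hΔ
  rcases hb3 with h | h <;>
    · obtain ⟨_, ⟨i, rfl⟩, hi⟩ := h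
      obtain ⟨ce, hce, hpred⟩ := atomsOf_tauCond opFun lt hi
      exact ⟨ce, hce, hpred⟩

theorem atomsOf_tauBElem {v : Val C} {loc : List ℕ} {e : BElem C O A} {b : EGAtom C}
    (hb : b ∈ IForm.atomsOf (tauBElem opFun aggFun lt v loc e)) :
    BElem.hasPred b.1 b.2.length e := by
  cases e with
  | lit l =>
      obtain ⟨h1, h2⟩ := atomsOf_tauLit opFun hb
      exact ⟨h1.symm, h2.symm⟩
  | comp c => exact (atomsOf_tauComp opFun lt hb).elim
  | agg E => exact atomsOf_tauAgg opFun aggFun lt hb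

theorem atomsOf_tauBody {v : Val C} {loc : List ℕ} {body : List (BElem C O A)} {b : EGAtom C}
    (hb : b ∈ IForm.atomsOf (tauBody opFun aggFun lt v loc body)) :
    ∃ e ∈ body, BElem.hasPred b.1 b.2.length e := by
  rw [tauBody, IForm.atomsOf_conjList] at hb
  simp only [Set.mem_iUnion] at hb
  obtain ⟨F, hF, hbF⟩ := hb
  obtain ⟨e, he, rfl⟩ := List.mem_map.1 hF
  exact ⟨e, he, atomsOf_tauBElem opFun aggFun lt hbF⟩

theorem atomsOf_tauRule {v : Val C} {R : Rule C O A} {b : EGAtom C}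
    (hb : b ∈ IForm.atomsOf (tauRule opFun aggFun lt v R)) :
    Rule.hasPredSym b.1 b.2.length R := by
  cases hhead : R.head with
  | basic p ts =>
      rw [tauRule, hhead] at hb
      have hb2 : b ∈ IForm.atomsOf (tauBody opFun aggFun lt v R.localList R.body) ∪
          IForm.atomsOf (IForm.conj {rs : List (Pre C) // Term.vals opFun v ts rs}
            (fun rs => .atom (p, rs.val))) := hb
      rcases hb2 with h | h
      · exact Or.inr (atomsOf_tauBody opFun aggFun lt h)
      · simp only [IForm.atomsOf, Set.mem_iUnion] at h
        obtain ⟨⟨rs, hrs⟩, hmem⟩ := h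
        have hbeq : b = (p, rs) := hmem
        subst hbeq
        refine Or.inl ?_
        rw [hhead]
        exact ⟨rfl, (Term.vals_length opFun hrs).symm⟩
  | choice p ts =>
      rw [tauRule, hhead] at hb
      have hb2 : b ∈ IForm.atomsOf (tauBody opFun aggFun lt v R.localList R.body) ∪
          IForm.atomsOf (IForm.conj {rs : List (Pre C) // Term.vals opFun v ts rs}
            (fun rs => .or (.atom (p, rs.val)) (.neg (.atom (p, rs.val))))) := hb
      rcases hb2 with h | h
      · exact Or.inr (atomsOf_tauBody opFun aggFun lt h)
      · simp only [IForm.atomsOf, Set.mem_iUnion] at h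
        obtain ⟨⟨rs, hrs⟩, hmem⟩ := h
        simp only [IForm.or, IForm.neg, IForm.atomsOf, Set.mem_iUnion] at hmem
        obtain ⟨bb, hbb⟩ := hmem
        have hbeq : b = (p, rs) := by
          cases bb
          · simpa [IForm.atomsOf] using hbb
          · simpa [IForm.atomsOf] using hbb
        subst hbeq
        refine Or.inl ?_
        rw [hhead]
        exact ⟨rfl, (Term.vals_length opFun hrs).symm⟩
  | empty =>
      rw [tauRule, hhead] at hb
      have hb2 : b ∈ IForm.atomsOf (tauBody opFun aggFun lt v R.localList R.body) ∪
          IForm.atomsOf (IForm.bot : IForm (EGAtom C)) := hb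
      rcases hb2 with h | h
      · exact Or.inr (atomsOf_tauBody opFun aggFun lt h)
      · simp [IForm.atomsOf] at h

theorem atomsOf_tauRule_vocab {Γ : Set (Rule C O A)} {R : Rule C O A} (hR : R ∈ Γ)
    {v : Val C} {b : EGAtom C}
    (hb : b ∈ IForm.atomsOf (tauRule opFun aggFun lt v R)) : b ∈ vocab Γ :=
  ⟨R, hR, atomsOf_tauRule opFun aggFun lt hb⟩

end TauAtoms

/-! ### Auxiliary: predicate symbol lists and supportedness -/

def Lit.predPair {C O : Type} (l : Lit C O) : C × ℕ := (l.pred, l.args.length)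

def CondElem.predList {C O : Type} : CondElem C O → List (C × ℕ) :=
  Sum.elim (fun l => [l.predPair]) (fun _ => [])

def BElem.predList {C O A : Type} : BElem C O A → List (C × ℕ)
  | .lit l => [l.predPair]
  | .comp _ => []
  | .agg E => E.cond.flatMap CondElem.predList

def Head.predList {C O : Type} : Head C O → List (C × ℕ)
  | .basic p ts => [(p, ts.length)]
  | .choice p ts => [(p, ts.length)]
  | .empty => []

def Rule.predList {C O A : Type} (R : Rule C O A) : List (C × ℕ) :=
  R.head.predList ++ R.body.flatMap BElem.predList

theorem mem_predList_of_hasPred_belem {C O A : Type} {p : C} {n : ℕ} {e : BElem C O A}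
    (h : BElem.hasPred p n e) : (p, n) ∈ e.predList := by
  cases e with
  | lit l =>
      obtain ⟨h1, h2⟩ := h
      simp [BElem.predList, Lit.predPair, h1, h2]
  | comp c => exact h.elim
  | agg E =>
      obtain ⟨ce, hce, hpred⟩ := h
      simp only [BElem.predList, List.mem_flatMap]
      refine ⟨ce, hce, ?_⟩
      cases ce with
      | inl l =>
          obtain ⟨h1, h2⟩ := hpred
          simp [CondElem.predList, Lit.predPair, h1, h2]
      | inr c => exact hpred.elim

theorem mem_predList_of_head {C O : Type} {p : C} {n : ℕ} {h : Head C O}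
    (hh : h.hasPred p n) : (p, n) ∈ h.predList := by
  cases h with
  | basic q ts => obtain ⟨h1, h2⟩ := hh; simp [Head.predList, h1, h2]
  | choice q ts => obtain ⟨h1, h2⟩ := hh; simp [Head.predList, h1, h2]
  | empty => exact hh.elim

theorem mem_predList_of_hasPredSym {C O A : Type} {p : C} {n : ℕ} {R : Rule C O A}
    (h : Rule.hasPredSym p n R) : (p, n) ∈ R.predList := by
  rcases h with h | ⟨e, he, hpred⟩
  · exact List.mem_append.2 (Or.inl (mem_predList_of_head h))
  · exact List.mem_append.2 (Or.inr (List.mem_flatMap.2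
      ⟨e, he, mem_predList_of_hasPred_belem hpred⟩))

theorem hasPred_of_hasPosOrAggPred {C O A : Type} {p : C} {n : ℕ} {e : BElem C O A}
    (h : BElem.hasPosOrAggPred p n e) : BElem.hasPred p n e := by
  cases e with
  | lit l => exact h.2
  | comp c => exact h
  | agg E => exact h

section StableChar
variable {C O A : Type}
variable (opFun : O → List ℤ → Option ℤ)
variable (aggFun : A → Set (List (Pre C)) → Pre C)
variable (lt : Pre C → Pre C → Prop)

/-- `I` is supported relative to the τ-translation of the program. -/
def TauSupp (I : Interp C) (Γ : Set (Rule C O A)) : Prop :=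
  ∀ a ∈ I, ∃ R ∈ Γ, ∃ v : Val C, ∃ ts rs,
    (R.head = Head.basic a.1 ts ∨ R.head = Head.choice a.1 ts) ∧
    Term.vals opFun v ts rs ∧ a.2 = rs ∧
    IForm.sat I (tauBody opFun aggFun lt v R.localList R.body)

theorem satJ_reduct_of_protected {I J : Set (EGAtom C)} (hJI : J ⊆ I)
    {F : IForm (EGAtom C)} (hprot : ∀ b ∈ IForm.atomsOf F, b ∈ I → b ∈ J) :
    IForm.sat J (IForm.reduct I F) ↔ IForm.sat I F := by
  rw [← IForm.sat_reduct_iff I F]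
  exact IForm.sat_congr fun a ha =>
    have ha' := IForm.atomsOf_reduct_subset I F ha
    ⟨fun h => hJI h, fun h => hprot a ha' h⟩

theorem satJ_reduct_conjList {I J : Set (EGAtom C)} {l : List (IForm (EGAtom C))} :
    IForm.sat J (IForm.reduct I (IForm.conjList l)) ↔
      ∀ F ∈ l, IForm.sat J (IForm.reduct I F) := by
  show (∀ i : Fin l.length, IForm.sat J (IForm.reduct I (l.get i))) ↔ _
  constructor
  · intro h F hF
    obtain ⟨i, rfl⟩ := List.get_of_mem hF
    exact h i
  · intro h i
    exact h _ (List.get_mem l i)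

theorem satJ_reduct_tauBElem {I J : Interp C} (hJI : J ⊆ I) (v : Val C) (loc : List ℕ)
    (e : BElem C O A)
    (hsatI : IForm.sat I (tauBElem opFun aggFun lt v loc e))
    (hprot : ∀ b : EGAtom C, BElem.hasPosOrAggPred b.1 b.2.length e → b ∈ I → b ∈ J) :
    IForm.sat J (IForm.reduct I (tauBElem opFun aggFun lt v loc e)) := by
  cases e with
  | lit l =>
      cases hpos : l.pos
      · -- negative literal
        have hsatI' : IForm.sat I (tauLit opFun v l) := hsatI
        rw [sat_tauLit] at hsatI'
        obtain ⟨rs, hvals, hmem⟩ := hsatI'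
        rw [hpos] at hmem
        simp only [cond] at hmem
        show IForm.sat J (IForm.reduct I (tauLit opFun v l))
        rw [tauLit, hpos]
        simp only [Bool.false_eq_true, if_false]
        refine ⟨⟨rs, hvals⟩, ?_⟩
        show IForm.sat J (IForm.reduct I (IForm.neg (IForm.atom (l.pred, rs))))
        rw [IForm.neg, IForm.reduct,
          if_pos (show IForm.sat I ((IForm.atom (l.pred, rs)).impl IForm.bot) from hmem)]
        intro hb
        rw [IForm.reduct, if_neg hmem] at hb
        exact hb
      · -- positive literal
        refine (satJ_reduct_of_protected hJI ?_).2 hsatI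
        intro b hb hbI
        obtain ⟨h1, h2⟩ := atomsOf_tauLit opFun hb
        exact hprot b ⟨hpos, h1.symm, h2.symm⟩ hbI
  | comp c =>
      refine (satJ_reduct_of_protected hJI ?_).2 hsatI
      intro b hb _
      exact (atomsOf_tauComp opFun lt hb).elim
  | agg E =>
      refine (satJ_reduct_of_protected hJI ?_).2 hsatI
      intro b hb hbI
      exact hprot b (atomsOf_tauAgg opFun aggFun lt hb) hbI

end StableChar

section StableIff
variable {C O A : Type}
variable (opFun : O → List ℤ → Option ℤ)
variable (aggFun : A → Set (List (Pre C)) → Pre C)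
variable (lt : Pre C → Pre C → Prop)

open Classical in
theorem IForm.reduct_atom {α : Type} (I : Set α) (a : α) :
    IForm.reduct I (IForm.atom a) =
      if a ∈ I then IForm.atom a else IForm.bot := rfl

theorem tauRule_eq_basic (v : Val C) (R : Rule C O A) {p : C} {ts : List (Term C O)}
    (h : R.head = Head.basic p ts) :
    tauRule opFun aggFun lt v R =
      .impl (tauBody opFun aggFun lt v R.localList R.body)
        (.conj {rs : List (Pre C) // Term.vals opFun v ts rs}
          (fun rs => .atom (p, rs.val))) := by
  obtain ⟨head, body⟩ := R
  simp only at h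
  subst h
  rfl

theorem tauRule_eq_choice (v : Val C) (R : Rule C O A) {p : C} {ts : List (Term C O)}
    (h : R.head = Head.choice p ts) :
    tauRule opFun aggFun lt v R =
      .impl (tauBody opFun aggFun lt v R.localList R.body)
        (.conj {rs : List (Pre C) // Term.vals opFun v ts rs}
          (fun rs => .or (.atom (p, rs.val)) (.neg (.atom (p, rs.val))))) := by
  obtain ⟨head, body⟩ := R
  simp only at h
  subst h
  rfl

theorem tauRule_eq_empty (v : Val C) (R : Rule C O A) (h : R.head = Head.empty) :
    tauRule opFun aggFun lt v R =
      .neg (tauBody opFun aggFun lt v R.localList R.body) := by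
  obtain ⟨head, body⟩ := R
  simp only at h
  subst h
  rfl

theorem stable_iff_supp (Γ : List (Rule C O A)) (htight : EGTight {R | R ∈ Γ})
    (I : Interp C) :
    EGStable opFun aggFun lt I {R | R ∈ Γ} ↔
      I ⊆ vocab {R | R ∈ Γ} ∧
      (∀ R ∈ Γ, ∀ v : Val C, IForm.sat I (tauRule opFun aggFun lt v R)) ∧
      TauSupp opFun aggFun lt I {R | R ∈ Γ} := by
  classical
  set Γs : Set (Rule C O A) := {R | R ∈ Γ} with hΓs
  have hred : IForm.reduct I (tauProg opFun aggFun lt Γs) =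
      IForm.conj ({R : Rule C O A // R ∈ Γs} × Val C)
        (fun z => IForm.reduct I (tauRule opFun aggFun lt z.2 z.1.val)) := rfl
  constructor
  · rintro ⟨h1, h2⟩
    have h1' : ∀ (R : Rule C O A) (hR : R ∈ Γs) (v : Val C),
        IForm.sat I (IForm.reduct I (tauRule opFun aggFun lt v R)) := by
      intro R hR v
      have := h1
      rw [hred] at this
      exact this ⟨⟨R, hR⟩, v⟩
    have hsat : ∀ R ∈ Γ, ∀ v : Val C, IForm.sat I (tauRule opFun aggFun lt v R) :=
      fun R hR v => (IForm.sat_reduct_iff I _).1 (h1' R hR v)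
    -- vocabulary
    have hvoc : I ⊆ vocab Γs := by
      have hJ : IForm.sat (I ∩ vocab Γs) (IForm.reduct I (tauProg opFun aggFun lt Γs)) := by
        rw [hred]
        intro z
        refine (IForm.sat_congr (I := I) (J := I ∩ vocab Γs) ?_).1 (h1' z.1.val z.1.property z.2)
        intro b hb
        have hbv : b ∈ vocab Γs := atomsOf_tauRule_vocab opFun aggFun lt z.1.property
          (IForm.atomsOf_reduct_subset I _ hb)
        exact ⟨fun h => ⟨h, hbv⟩, fun h => h.1⟩
      have := h2 (I ∩ vocab Γs) Set.inter_subset_left hJ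
      intro a ha
      rw [← this] at ha
      exact ha.2
    refine ⟨hvoc, hsat, ?_⟩
    -- supportedness
    intro a ha
    set J : Interp C := I \ {a} with hJdef
    have hJI : J ⊆ I := Set.diff_subset
    have hne : J ≠ I := by
      intro h
      have : a ∈ J := h.symm ▸ ha
      exact this.2 rfl
    have hnots : ¬ IForm.sat J (IForm.reduct I (tauProg opFun aggFun lt Γs)) :=
      fun hs => hne (h2 J hJI hs)
    rw [hred] at hnots
    have : ∃ z : {R : Rule C O A // R ∈ Γs} × Val C,
        ¬ IForm.sat J (IForm.reduct I (tauRule opFun aggFun lt z.2 z.1.val)) := by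
      by_contra hc
      push_neg at hc
      exact hnots fun z => hc z
    obtain ⟨⟨⟨R, hR⟩, v⟩, hnsat⟩ := this
    simp only at hnsat
    have hsatrule := hsat R hR v
    have hsatred := h1' R hR v
    cases hhead : R.head with
    | basic p ts =>
        rw [tauRule_eq_basic opFun aggFun lt v R hhead] at hnsat hsatrule hsatred
        rw [IForm.reduct, if_pos hsatrule] at hnsat hsatred
        have hJb : IForm.sat J (IForm.reduct I
            (tauBody opFun aggFun lt v R.localList R.body)) := by
          by_contra hc
          exact hnsat fun hb => absurd hb hc
        have hJh : ¬ IForm.sat J (IForm.reduct I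
            (IForm.conj {rs : List (Pre C) // Term.vals opFun v ts rs}
              (fun rs => IForm.atom (p, rs.val)))) :=
          fun hh => hnsat fun _ => hh
        have hIbody : IForm.sat I (tauBody opFun aggFun lt v R.localList R.body) :=
          IForm.sat_of_sat_reduct hJI hJb
        have hIh : IForm.sat I (IForm.reduct I
            (IForm.conj {rs : List (Pre C) // Term.vals opFun v ts rs}
              (fun rs => IForm.atom (p, rs.val)))) :=
          hsatred ((IForm.sat_reduct_iff I _).2 hIbody)
        have : ∃ rs : {rs : List (Pre C) // Term.vals opFun v ts rs},
            ¬ IForm.sat J (IForm.reduct I (IForm.atom (p, rs.val))) := by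
          by_contra hc
          push_neg at hc
          exact hJh fun rs => hc rs
        obtain ⟨⟨rs, hvals⟩, hnat⟩ := this
        have hIat : IForm.sat I (IForm.reduct I (IForm.atom (p, rs))) := hIh ⟨rs, hvals⟩
        by_cases hmem : (p, rs) ∈ I
        · rw [IForm.reduct_atom, if_pos hmem] at hnat
          have : (p, rs) ∉ J := hnat
          have heq : (p, rs) = a := by
            by_contra hne'
            exact this ⟨hmem, hne'⟩
          refine ⟨R, hR, v, ts, rs, Or.inl ?_, hvals, ?_, hIbody⟩
          · rw [hhead, ← heq]
          · rw [← heq]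
        · rw [IForm.reduct_atom, if_neg hmem] at hIat
          exact hIat.elim
    | choice p ts =>
        rw [tauRule_eq_choice opFun aggFun lt v R hhead] at hnsat hsatrule hsatred
        rw [IForm.reduct, if_pos hsatrule] at hnsat hsatred
        have hJb : IForm.sat J (IForm.reduct I
            (tauBody opFun aggFun lt v R.localList R.body)) := by
          by_contra hc
          exact hnsat fun hb => absurd hb hc
        have hJh : ¬ IForm.sat J (IForm.reduct I
            (IForm.conj {rs : List (Pre C) // Term.vals opFun v ts rs}
              (fun rs => IForm.or (IForm.atom (p, rs.val))
                (IForm.neg (IForm.atom (p, rs.val)))))) :=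
          fun hh => hnsat fun _ => hh
        have hIbody : IForm.sat I (tauBody opFun aggFun lt v R.localList R.body) :=
          IForm.sat_of_sat_reduct hJI hJb
        have : ∃ rs : {rs : List (Pre C) // Term.vals opFun v ts rs},
            ¬ IForm.sat J (IForm.reduct I
              (IForm.or (IForm.atom (p, rs.val)) (IForm.neg (IForm.atom (p, rs.val))))) := by
          by_contra hc
          push_neg at hc
          exact hJh fun rs => hc rs
        obtain ⟨⟨rs, hvals⟩, hnat⟩ := this
        by_cases hmem : (p, rs) ∈ I
        · have : (p, rs) ∉ J := by
            intro hmemJ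
            refine hnat ⟨true, ?_⟩
            show IForm.sat J (IForm.reduct I (IForm.atom (p, rs)))
            rw [IForm.reduct_atom, if_pos hmem]
            exact hmemJ
          have heq : (p, rs) = a := by
            by_contra hne'
            exact this ⟨hmem, hne'⟩
          refine ⟨R, hR, v, ts, rs, Or.inr ?_, hvals, ?_, hIbody⟩
          · rw [hhead, ← heq]
          · rw [← heq]
        · exfalso
          refine hnat ⟨false, ?_⟩
          show IForm.sat J (IForm.reduct I (IForm.neg (IForm.atom (p, rs))))
          rw [IForm.neg, IForm.reduct,
            if_pos (show IForm.sat I ((IForm.atom (p, rs)).impl IForm.bot) from hmem)]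
          intro hb
          rw [IForm.reduct_atom, if_neg hmem] at hb
          exact hb
    | empty =>
        rw [tauRule_eq_empty opFun aggFun lt v R hhead] at hnsat hsatrule hsatred
        rw [IForm.neg] at hnsat hsatrule
        rw [IForm.reduct, if_pos hsatrule] at hnsat
        have hJb : IForm.sat J (IForm.reduct I
            (tauBody opFun aggFun lt v R.localList R.body)) := by
          by_contra hc
          exact hnsat fun hb => absurd hb hc
        exact (hsatrule (IForm.sat_of_sat_reduct hJI hJb)).elim
  · rintro ⟨hvoc, hsat, hsupp⟩
    constructor
    · rw [hred]
      intro z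
      exact (IForm.sat_reduct_iff I _).2 (hsat z.1.val z.1.property z.2)
    · intro J hJI hJsat
      rw [hred] at hJsat
      have hJrule : ∀ (R : Rule C O A) (hR : R ∈ Γs) (v : Val C),
          IForm.sat J (IForm.reduct I (tauRule opFun aggFun lt v R)) :=
        fun R hR v => hJsat ⟨⟨R, hR⟩, v⟩
      refine Set.Subset.antisymm hJI ?_
      -- well-founded induction over the dependency graph
      set PL : List (C × ℕ) := Γ.flatMap Rule.predList with hPL
      have hfin : Finite {x : C × ℕ // x ∈ PL} := (PL.finite_toSet).to_subtype
      set rr : {x : C × ℕ // x ∈ PL} → {x : C × ℕ // x ∈ PL} → Prop :=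
        fun t s => Relation.TransGen (DepEdge Γs) s.val t.val with hrr
      haveI : IsTrans _ rr := ⟨fun a b c hab hbc => Relation.TransGen.trans hbc hab⟩
      haveI : IsIrrefl _ rr := ⟨fun a h => htight a.val h⟩
      have hwf : WellFounded rr := Finite.wellFounded_of_trans_of_irrefl rr
      have hkey : ∀ s : {x : C × ℕ // x ∈ PL},
          ∀ a ∈ I, a.1 = s.val.1 → a.2.length = s.val.2 → a ∈ J := by
        intro s
        induction s using WellFounded.induction hwf with
        | _ s ih =>
        intro a ha h1 h2
        obtain ⟨R, hR, v, ts, rs, hhead, hvals, ha2, hbody⟩ := hsupp a ha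
        have hlen : ts.length = a.2.length := by
          rw [ha2, Term.vals_length opFun hvals]
        have hheadpred : R.head.hasPred s.val.1 s.val.2 := by
          rcases hhead with hh | hh <;>
            · rw [hh, Head.hasPred]
              exact ⟨h1, by rw [hlen, h2]⟩
        -- J satisfies the reduct of the body of this instance
        have hJbody : IForm.sat J (IForm.reduct I
            (tauBody opFun aggFun lt v R.localList R.body)) := by
          rw [tauBody]
          rw [satJ_reduct_conjList]
          intro F hF
          obtain ⟨e, he, rfl⟩ := List.mem_map.1 hF
          refine satJ_reduct_tauBElem opFun aggFun lt hJI v R.localList e ?_ ?_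
          · have := (IForm.sat_conjList I _).1 hbody
            exact this _ (List.mem_map.2 ⟨e, he, rfl⟩)
          · intro b hpred hbI
            have hbPL : (b.1, b.2.length) ∈ PL := by
              rw [hPL]
              exact List.mem_flatMap.2 ⟨R, hR, mem_predList_of_hasPredSym
                (Or.inr ⟨e, he, hasPred_of_hasPosOrAggPred hpred⟩)⟩
            have hedge : DepEdge Γs s.val (b.1, b.2.length) :=
              ⟨R, hR, hheadpred, e, he, hpred⟩
            exact ih ⟨(b.1, b.2.length), hbPL⟩ (Relation.TransGen.single hedge)
              b hbI rfl rfl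
        -- conclude a ∈ J from the head of the rule instance
        have hsatrule := hsat R hR v
        have hJr := hJrule R hR v
        rcases hhead with hh | hh
        · rw [tauRule_eq_basic opFun aggFun lt v R hh] at hsatrule hJr
          rw [IForm.reduct, if_pos hsatrule] at hJr
          have hhd := hJr hJbody
          have hat : IForm.sat J (IForm.reduct I (IForm.atom (a.1, rs))) := hhd ⟨rs, hvals⟩
          have haI : (a.1, rs) ∈ I := by rw [← ha2]; exact ha
          rw [IForm.reduct_atom, if_pos haI] at hat
          have : (a.1, rs) ∈ J := hat
          rw [← ha2] at this
          exact this
        · rw [tauRule_eq_choice opFun aggFun lt v R hh] at hsatrule hJr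
          rw [IForm.reduct, if_pos hsatrule] at hJr
          have hhd := hJr hJbody
          have hdisj : IForm.sat J (IForm.reduct I
              (IForm.or (IForm.atom (a.1, rs)) (IForm.neg (IForm.atom (a.1, rs))))) :=
            hhd ⟨rs, hvals⟩
          have haI : (a.1, rs) ∈ I := by rw [← ha2]; exact ha
          obtain ⟨bb, hbb⟩ := hdisj
          cases bb
          · -- reduct of the negated atom is unsatisfiable since the atom is in I
            exfalso
            have hbb' : IForm.sat J (IForm.reduct I
                (IForm.neg (IForm.atom (a.1, rs)))) := hbb
            rw [IForm.neg, IForm.reduct, if_neg (fun hc => hc haI)] at hbb'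
            exact hbb'
          · have hbb' : IForm.sat J (IForm.reduct I (IForm.atom (a.1, rs))) := hbb
            rw [IForm.reduct_atom, if_pos haI] at hbb'
            have : (a.1, rs) ∈ J := hbb'
            rw [← ha2] at this
            exact this
      intro a ha
      obtain ⟨R, hR, hps⟩ := hvoc ha
      exact hkey ⟨(a.1, a.2.length),
        List.mem_flatMap.2 ⟨R, hR, mem_predList_of_hasPredSym hps⟩⟩ a ha rfl rfl

end StableIff

/-! ### Auxiliary: variable classification in rules -/

section RuleVars
variable {C O A : Type}

theorem nodup_globalList (R : Rule C O A) : R.globalList.Nodup := List.nodup_dedup _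

theorem nodup_localList (R : Rule C O A) : R.localList.Nodup :=
  (List.nodup_dedup _).filter _

theorem not_mem_global_of_local {R : Rule C O A} {x : ℕ} (h : x ∈ R.localList) :
    x ∉ R.globalList := by
  have := (List.mem_filter.1 h).2
  simpa using this

theorem mem_varList_of_global {R : Rule C O A} {x : ℕ} (h : x ∈ R.globalList) :
    x ∈ R.varList := by
  rw [Rule.globalList, List.mem_dedup] at h
  rw [Rule.varList, List.mem_append] at *
  rcases h with h | h
  · exact Or.inl h
  · obtain ⟨e, he, hx⟩ := List.mem_flatMap.1 h
    refine Or.inr (List.mem_flatMap.2 ⟨e, he, ?_⟩)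
    cases e with
    | lit l => exact hx
    | comp c => exact hx
    | agg E =>
        rw [BElem.varList, AggExpr.varList, List.mem_append]
        exact Or.inr hx

theorem mem_varList_of_belem {R : Rule C O A} {e : BElem C O A} (he : e ∈ R.body)
    {x : ℕ} (h : x ∈ e.varList) : x ∈ R.varList := by
  rw [Rule.varList, List.mem_append]
  exact Or.inr (List.mem_flatMap.2 ⟨e, he, h⟩)

theorem mem_varList_of_head {R : Rule C O A} {x : ℕ} (h : x ∈ R.head.varList) :
    x ∈ R.varList := by
  rw [Rule.varList, List.mem_append]
  exact Or.inl h

theorem mem_global_of_head {R : Rule C O A} {x : ℕ} (h : x ∈ R.head.varList) :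
    x ∈ R.globalList := by
  rw [Rule.globalList, List.mem_dedup, List.mem_append]
  exact Or.inl h

theorem mem_global_of_bound {R : Rule C O A} {E : AggExpr C O A}
    (he : BElem.agg E ∈ R.body) {x : ℕ} (h : x ∈ boundVarList E.bound) :
    x ∈ R.globalList := by
  rw [Rule.globalList, List.mem_dedup, List.mem_append]
  exact Or.inr (List.mem_flatMap.2 ⟨BElem.agg E, he, h⟩)

theorem mem_global_of_lit {R : Rule C O A} {l : Lit C O}
    (he : BElem.lit l ∈ R.body) {x : ℕ} (h : x ∈ l.varList) :
    x ∈ R.globalList := by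
  rw [Rule.globalList, List.mem_dedup, List.mem_append]
  exact Or.inr (List.mem_flatMap.2 ⟨BElem.lit l, he, h⟩)

theorem mem_global_of_comp {R : Rule C O A} {c : Comp C O}
    (he : BElem.comp c ∈ R.body) {x : ℕ} (h : x ∈ c.varList) :
    x ∈ R.globalList := by
  rw [Rule.globalList, List.mem_dedup, List.mem_append]
  exact Or.inr (List.mem_flatMap.2 ⟨BElem.comp c, he, h⟩)

/-- every variable of a body element is global or local -/
theorem mem_global_of_not_local {R : Rule C O A} {e : BElem C O A} (he : e ∈ R.body)
    {x : ℕ} (hx : x ∈ e.varList) (hnl : x ∉ R.localList) : x ∈ R.globalList := by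
  cases e with
  | lit l => exact mem_global_of_lit he hx
  | comp c => exact mem_global_of_comp he hx
  | agg E =>
      rw [BElem.varList, AggExpr.varList, List.mem_append] at hx
      rcases hx with hx | hx
      · by_contra hng
        refine hnl ?_
        rw [Rule.localList, List.mem_filter]
        constructor
        · rw [List.mem_dedup]
          exact List.mem_flatMap.2 ⟨BElem.agg E, he, hx⟩
        · simpa using hng
      · exact mem_global_of_bound he hx

theorem definesB_iff {C' : Type} [DecidableEq C'] {p : C'} {n : ℕ}
    {R : Rule C' O A} :
    definesB p n R = true ↔
      ∃ ts, (R.head = Head.basic p ts ∨ R.head = Head.choice p ts) ∧ ts.length = n := by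
  cases hh : R.head with
  | basic q ts =>
      rw [definesB, hh]
      simp only [decide_eq_true_eq]
      constructor
      · rintro ⟨rfl, h2⟩; exact ⟨ts, Or.inl rfl, h2⟩
      · rintro ⟨ts', (h | h), h2⟩
        · injection h with h3 h4
          subst h3; subst h4; exact ⟨rfl, h2⟩
        · cases h
  | choice q ts =>
      rw [definesB, hh]
      simp only [decide_eq_true_eq]
      constructor
      · rintro ⟨rfl, h2⟩; exact ⟨ts, Or.inr rfl, h2⟩
      · rintro ⟨ts', (h | h), h2⟩
        · cases h
        · injection h with h3 h4
          subst h3; subst h4; exact ⟨rfl, h2⟩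
  | empty =>
      rw [definesB, hh]
      simp only [Bool.false_eq_true, false_iff]
      rintro ⟨ts', (h | h), _⟩ <;> exact absurd h (by simp [hh])

end RuleVars

/-! ### Auxiliary: completed definitions vs τ -/

section CompletionLemmas
variable {C O A : Type}
variable (opFun : O → List ℤ → Option ℤ)
variable (aggFun : A → Set (List (Pre C)) → Pre C)
variable (lt : Pre C → Pre C → Prop)
variable (I : Interp C)

theorem ruleAnte_eq_basic (Vs : List ℕ) (R : Rule C O A) {p : C} {ts : List (Term C O)}
    (h : R.head = Head.basic p ts) :
    ruleAnte Vs R = AFml.andF (memConj Vs ts)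
      (phiBody R.localList R.body (A := A)) := by
  obtain ⟨head, body⟩ := R
  simp only at h
  subst h
  rfl

theorem ruleAnte_eq_choice (Vs : List ℕ) (R : Rule C O A) {p : C} {ts : List (Term C O)}
    (h : R.head = Head.choice p ts) :
    ruleAnte Vs R = AFml.andF (memConj Vs ts)
      (AFml.andF (phiBody R.localList R.body)
        (AFml.atom p (Vs.map AArg.var))) := by
  obtain ⟨head, body⟩ := R
  simp only at h
  subst h
  rfl

theorem tauBody_congr_rule {R : Rule C O A} {v₁ v₂ : Val C}
    (h : ∀ x ∈ R.globalList, v₁ x = v₂ x) :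
    IForm.sat I (tauBody opFun aggFun lt v₁ R.localList R.body) ↔
      IForm.sat I (tauBody opFun aggFun lt v₂ R.localList R.body) := by
  rw [tauBody, tauBody, IForm.sat_conjList, IForm.sat_conjList]
  have helem : ∀ e ∈ R.body,
      (IForm.sat I (tauBElem opFun aggFun lt v₁ R.localList e) ↔
        IForm.sat I (tauBElem opFun aggFun lt v₂ R.localList e)) := by
    intro e he
    refine tauBElem_congr opFun aggFun lt I R.localList e ?_ ?_
    · intro x hx hnm
      refine h x ?_
      cases e with
      | lit l => exact mem_global_of_lit he hx
      | comp c => exact mem_global_of_comp he hx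
      | agg E =>
          refine mem_global_of_not_local he hx ?_
          intro hloc
          rw [BElem.varList] at hx
          refine hnm ?_
          simp only [List.mem_filter, List.mem_dedup]
          rw [AggExpr.varList, List.mem_append] at hx
          rcases hx with hx | hx
          · exact ⟨by rw [AggExpr.varList, List.mem_append]; exact Or.inl hx, by simpa using hloc⟩
          · exact ⟨by rw [AggExpr.varList, List.mem_append]; exact Or.inr hx, by simpa using hloc⟩
    · intro E heq x hx hloc
      subst heq
      exact not_mem_global_of_local hloc (mem_global_of_bound he hx)
  constructor <;> intro hall F hF <;> obtain ⟨e, he, rfl⟩ := List.mem_map.1 hF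
  · exact (helem e he).1 (hall _ (List.mem_map.2 ⟨e, he, rfl⟩))
  · exact (helem e he).2 (hall _ (List.mem_map.2 ⟨e, he, rfl⟩))

theorem sat_completedDef_iff [DecidableEq C] (Γ : List (Rule C O A)) (p : C) (n : ℕ) :
    (∀ v : Val C, AFml.sat opFun aggFun lt I v (completedDef Γ p n)) ↔
      ∀ rs : List (Pre C), rs.length = n →
        ((p, rs) ∈ I ↔ ∃ R ∈ Γ, ∃ ts, ∃ w : Val C,
          (R.head = Head.basic p ts ∨ (R.head = Head.choice p ts ∧ (p, rs) ∈ I)) ∧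
          Term.vals opFun w ts rs ∧
          IForm.sat I (tauBody opFun aggFun lt w R.localList R.body)) := by
  classical
  set base := freshVar (Γ.flatMap Rule.varList) with hbase_def
  set Vs : List ℕ := (List.range n).map (· + base) with hVs_def
  have hbase : ∀ R ∈ Γ, ∀ x ∈ R.varList, x < base :=
    fun R hR x hx => lt_freshVar (List.mem_flatMap.2 ⟨R, hR, hx⟩)
  have hndVs : Vs.Nodup := nodup_range_map_add _ _
  have hlenVs : Vs.length = n := by simp [hVs_def]
  have hVge : ∀ V ∈ Vs, base ≤ V := fun V hV => le_of_mem_range_map_add (hVs_def ▸ hV)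
  have hVnotvar : ∀ R ∈ Γ, ∀ V ∈ Vs, V ∉ R.varList := fun R hR V hV hmem => by
    have := hbase R hR V hmem; have := hVge V hV; omega
  have hVnotgl : ∀ R ∈ Γ, ∀ V ∈ Vs, V ∉ R.globalList := fun R hR V hV hmem =>
    hVnotvar R hR V hV (mem_varList_of_global hmem)
  have hcd : completedDef Γ p n = AFml.allList Vs (AFml.iffF (AFml.atom p (Vs.map AArg.var))
      (AFml.orList ((Γ.filter (definesB p n)).map
        (fun R => AFml.exList R.globalList (ruleAnte Vs R))))) := rfl
  -- key claim about the disjunction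
  have horl : ∀ (u : Val C) (rs : List (Pre C)), rs.length = n → Vs.map u = rs →
      (AFml.sat opFun aggFun lt I u (AFml.orList ((Γ.filter (definesB p n)).map
          (fun R => AFml.exList R.globalList (ruleAnte Vs R)))) ↔
        ∃ R ∈ Γ, ∃ ts, ∃ w : Val C,
          (R.head = Head.basic p ts ∨ (R.head = Head.choice p ts ∧ (p, rs) ∈ I)) ∧
          Term.vals opFun w ts rs ∧
          IForm.sat I (tauBody opFun aggFun lt w R.localList R.body)) := by
    intro u rs hlen hmap
    rw [AFml.sat_orList]
    constructor
    · rintro ⟨F, hF, hsat⟩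
      obtain ⟨R, hRf, rfl⟩ := List.mem_map.1 hF
      have hRΓ : R ∈ Γ := (List.mem_filter.1 hRf).1
      have hdef : definesB p n R = true := by simpa using (List.mem_filter.1 hRf).2
      obtain ⟨ts, hhead, hlents⟩ := definesB_iff.1 hdef
      rw [AFml.sat_exList _ _ _ _ _ _ (nodup_globalList R)] at hsat
      obtain ⟨ss, hlenss, hsat⟩ := hsat
      set w := updList u R.globalList ss with hw
      have hVw : Vs.map w = rs := by
        rw [← hmap]
        exact List.map_congr_left fun V hV =>
          updList_eq_of_not_mem u R.globalList ss V (hVnotgl R hRΓ V hV)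
      rcases hhead with hh | hh
      · rw [ruleAnte_eq_basic Vs R hh, AFml.sat_andF] at hsat
        obtain ⟨hmc, hpb⟩ := hsat
        have hvals : Term.vals opFun w ts (Vs.map w) :=
          (sat_memConj opFun aggFun lt I w Vs ts (by rw [hlenVs, hlents])).1 hmc
        rw [hVw] at hvals
        exact ⟨R, hRΓ, ts, w, Or.inl hh, hvals,
          (sat_phiBody opFun aggFun lt I w R.localList (nodup_localList R) R.body).1 hpb⟩
      · rw [ruleAnte_eq_choice Vs R hh, AFml.sat_andF, AFml.sat_andF] at hsat
        obtain ⟨hmc, hpb, hat⟩ := hsat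
        have hvals : Term.vals opFun w ts (Vs.map w) :=
          (sat_memConj opFun aggFun lt I w Vs ts (by rw [hlenVs, hlents])).1 hmc
        rw [hVw] at hvals
        have hmem : (p, rs) ∈ I := by
          have : (p, AArg.evalL opFun aggFun lt I w (Vs.map AArg.var)) ∈ I := hat
          rwa [AArg.evalL_map_var, hVw] at this
        exact ⟨R, hRΓ, ts, w, Or.inr ⟨hh, hmem⟩, hvals,
          (sat_phiBody opFun aggFun lt I w R.localList (nodup_localList R) R.body).1 hpb⟩
    · rintro ⟨R, hRΓ, ts, w, hhead, hvals, hbody⟩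
      have hlents : ts.length = n := by
        rw [← hlen, Term.vals_length opFun hvals]
      have hdef : definesB p n R = true := definesB_iff.2
        ⟨ts, by rcases hhead with hh | hh; exact Or.inl hh; exact Or.inr hh.1, hlents⟩
      refine ⟨AFml.exList R.globalList (ruleAnte Vs R),
        List.mem_map.2 ⟨R, List.mem_filter.2 ⟨hRΓ, by simpa using hdef⟩, rfl⟩, ?_⟩
      rw [AFml.sat_exList _ _ _ _ _ _ (nodup_globalList R)]
      refine ⟨R.globalList.map w, by simp, ?_⟩
      set w' := updList u R.globalList (R.globalList.map w) with hw'
      have hw'eq : ∀ x, w' x = if x ∈ R.globalList then w x else u x :=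
        fun x => updList_map u R.globalList w (nodup_globalList R) x
      have hglw : ∀ x ∈ R.globalList, w x = w' x := fun x hx => by
        rw [hw'eq x, if_pos hx]
      have hVw' : Vs.map w' = rs := by
        rw [← hmap]
        exact List.map_congr_left fun V hV => by
          rw [hw'eq V, if_neg (hVnotgl R hRΓ V hV)]
      have htsvars : ∀ x ∈ Term.varListL ts, x ∈ R.globalList := by
        intro x hx
        refine mem_global_of_head ?_
        rcases hhead with hh | hh
        · rw [hh]; exact hx
        · rw [hh.1]; exact hx
      have hvals' : Term.vals opFun w' ts rs :=
        (Term.vals_congr opFun w w' ts rs (fun x hx => hglw x (htsvars x hx))).1 hvals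
      have hbody' : IForm.sat I (tauBody opFun aggFun lt w' R.localList R.body) :=
        (tauBody_congr_rule opFun aggFun lt I hglw).1 hbody
      have hmc : AFml.sat opFun aggFun lt I w' (memConj (A := A) Vs ts) := by
        refine (sat_memConj opFun aggFun lt I w' Vs ts (by rw [hlenVs, hlents])).2 ?_
        rw [hVw']
        exact hvals'
      have hpb : AFml.sat opFun aggFun lt I w' (phiBody R.localList R.body) :=
        (sat_phiBody opFun aggFun lt I w' R.localList (nodup_localList R) R.body).2 hbody'
      rcases hhead with hh | hh
      · rw [ruleAnte_eq_basic Vs R hh, AFml.sat_andF]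
        exact ⟨hmc, hpb⟩
      · rw [ruleAnte_eq_choice Vs R hh.1, AFml.sat_andF, AFml.sat_andF]
        refine ⟨hmc, hpb, ?_⟩
        show (p, AArg.evalL opFun aggFun lt I w' (Vs.map AArg.var)) ∈ I
        rw [AArg.evalL_map_var, hVw']
        exact hh.2
  constructor
  · intro h rs hlen
    have hs := h (fun _ => Pre.inf)
    rw [hcd, AFml.sat_allList _ _ _ _ _ _ hndVs] at hs
    have hs2 := hs rs (by rw [hlen, hlenVs])
    rw [AFml.sat_iffF] at hs2
    set u := updList (fun _ => Pre.inf) Vs rs with hu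
    have hmap : Vs.map u = rs := map_updList_self hndVs (by rw [hlen, hlenVs])
    have hat : AFml.sat opFun aggFun lt I u (AFml.atom p (Vs.map AArg.var)) ↔
        (p, rs) ∈ I := by
      show (p, AArg.evalL opFun aggFun lt I u (Vs.map AArg.var)) ∈ I ↔ _
      rw [AArg.evalL_map_var, hmap]
    rw [hat] at hs2
    rw [← horl u rs hlen hmap]
    exact hs2
  · intro h v
    rw [hcd, AFml.sat_allList _ _ _ _ _ _ hndVs]
    intro rs hlen
    rw [AFml.sat_iffF]
    set u := updList v Vs rs with hu
    have hlen' : rs.length = n := by rw [hlen, hlenVs]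
    have hmap : Vs.map u = rs := map_updList_self hndVs hlen
    have hat : AFml.sat opFun aggFun lt I u (AFml.atom p (Vs.map AArg.var)) ↔
        (p, rs) ∈ I := by
      show (p, AArg.evalL opFun aggFun lt I u (Vs.map AArg.var)) ∈ I ↔ _
      rw [AArg.evalL_map_var, hmap]
    rw [hat, horl u rs hlen' hmap]
    exact h rs hlen'

end CompletionLemmas

section FinalAssembly
variable {C O A : Type}
variable (opFun : O → List ℤ → Option ℤ)
variable (aggFun : A → Set (List (Pre C)) → Pre C)
variable (lt : Pre C → Pre C → Prop)

theorem satCompletion_iff_aux [DecidableEq C] (Γ : List (Rule C O A)) (I : Interp C)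
    (hvoc : I ⊆ vocab {R | R ∈ Γ}) :
    SatCompletion opFun aggFun lt Γ I ↔
      ((∀ R ∈ Γ, ∀ v : Val C, IForm.sat I (tauRule opFun aggFun lt v R)) ∧
        TauSupp opFun aggFun lt I {R | R ∈ Γ}) := by
  constructor
  · rintro ⟨hdefs, hcons⟩
    constructor
    · intro R hR v
      cases hh : R.head with
      | basic p ts =>
          rw [tauRule_eq_basic opFun aggFun lt v R hh]
          intro hbody i
          obtain ⟨rs, hvals⟩ := i
          have hocc : ∃ R' ∈ Γ, Rule.hasPredSym p ts.length R' :=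
            ⟨R, hR, Or.inl (by rw [hh]; exact ⟨rfl, rfl⟩)⟩
          have hiff := (sat_completedDef_iff opFun aggFun lt I Γ p ts.length).1
            (hdefs p ts.length hocc) rs (Term.vals_length opFun hvals)
          show (p, rs) ∈ I
          exact hiff.2 ⟨R, hR, ts, v, Or.inl hh, hvals, hbody⟩
      | choice p ts =>
          rw [tauRule_eq_choice opFun aggFun lt v R hh]
          intro _ i
          obtain ⟨rs, hvals⟩ := i
          by_cases hmem : (p, rs) ∈ I
          · exact ⟨true, hmem⟩
          · exact ⟨false, fun hc => hmem hc⟩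
      | empty =>
          rw [tauRule_eq_empty opFun aggFun lt v R hh]
          intro hbody
          have hc := hcons R hR hh v
          have hc' : AFml.sat opFun aggFun lt I v
              (AFml.negF (phiBody R.localList R.body)) := hc
          rw [AFml.sat_negF,
            sat_phiBody opFun aggFun lt I v R.localList (nodup_localList R)] at hc'
          exact hc' hbody
    · intro a ha
      obtain ⟨R0, hR0, hps⟩ := hvoc ha
      have hiff := (sat_completedDef_iff opFun aggFun lt I Γ a.1 a.2.length).1
        (hdefs a.1 a.2.length ⟨R0, hR0, hps⟩) a.2 rfl
      have hmem : (a.1, a.2) ∈ I := ha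
      obtain ⟨R, hR, ts, w, hhead, hvals, hbody⟩ := hiff.1 hmem
      refine ⟨R, hR, w, ts, a.2, ?_, hvals, rfl, hbody⟩
      rcases hhead with hh | hh
      · exact Or.inl hh
      · exact Or.inr hh.1
  · rintro ⟨hsat, hsupp⟩
    constructor
    · intro p n hocc
      refine (sat_completedDef_iff opFun aggFun lt I Γ p n).2 ?_
      intro rs hlen
      constructor
      · intro hmem
        obtain ⟨R, hR, w, ts, rs', hhead, hvals, ha2, hbody⟩ := hsupp (p, rs) hmem
        have hrs : rs = rs' := ha2
        subst hrs
        refine ⟨R, hR, ts, w, ?_, hvals, hbody⟩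
        rcases hhead with hh | hh
        · exact Or.inl hh
        · exact Or.inr ⟨hh, hmem⟩
      · rintro ⟨R, hR, ts, w, hhead, hvals, hbody⟩
        rcases hhead with hh | hh
        · have hs := hsat R hR w
          rw [tauRule_eq_basic opFun aggFun lt w R hh] at hs
          exact hs hbody ⟨rs, hvals⟩
        · exact hh.2
    · intro R hR hempty v
      have hs := hsat R hR v
      rw [tauRule_eq_empty opFun aggFun lt v R hempty] at hs
      show AFml.sat opFun aggFun lt I v (AFml.negF (phiBody R.localList R.body))
      rw [AFml.sat_negF,
        sat_phiBody opFun aggFun lt I v R.localList (nodup_localList R)]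
      exact fun hb => hs hb

end FinalAssembly

/-- Theorem 2: for any tight finite EG program `Γ`, an
interpretation `I` is a stable model of `Γ` iff `I` is contained in the
vocabulary of `Γ` and satisfies the completion of `Γ`. -/
theorem theorem_2 {C O A : Type} [DecidableEq C]
    (opFun : O → List ℤ → Option ℤ)
    (aggFun : A → Set (List (Pre C)) → Pre C)
    (lt : Pre C → Pre C → Prop) (hlt : PreOrderOK lt)
    (Γ : List (Rule C O A)) (htight : EGTight {R | R ∈ Γ}) (I : Interp C) :
    EGStable opFun aggFun lt I {R | R ∈ Γ} ↔
      I ⊆ vocab {R | R ∈ Γ} ∧ SatCompletion opFun aggFun lt Γ I := by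
  rw [stable_iff_supp opFun aggFun lt Γ htight I]
  constructor
  · rintro ⟨hvoc, hsat, hsupp⟩
    exact ⟨hvoc, (satCompletion_iff_aux opFun aggFun lt Γ I hvoc).2 ⟨hsat, hsupp⟩⟩
  · rintro ⟨hvoc, hcomp⟩
    obtain ⟨hsat, hsupp⟩ := (satCompletion_iff_aux opFun aggFun lt Γ I hvoc).1 hcomp
    exact ⟨hvoc, hsat, hsupp⟩

end EG
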